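/- arXiv:2403.10577 — 3 statements merged into one kernel-verified Lean document; each statement's English description precedes it below -/
import Mathlib

section
/- The binomial Eulerian polynomial Ã_n(t) := 1 + t·Σ_{k=1}^n C(n,k)·A_k(t) equals Σ_{σ ∈ S̃_n} t^{exc(σ)+1}, where S̃_n is the set of decorated permutations of [n], exc(σ) counts positions i with σ_i > i for σ ≠ θ, and exc(θ) = −1. -/
open scoped Classical

/-- A decorated permutation of `[n]`, encoded as its one-line word
`w : Fin n → Fin (n+1)` (position `i` is the 1-based position `i+1`, value `0`
means no value): the nonzero entries are distinct, and every nonzero value is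
(the 1-based name of) a position carrying a nonzero entry.  Hence the nonzero
entries form a permutation of their set of positions. -/
def IsDecorated {n : ℕ} (w : Fin n → Fin (n + 1)) : Prop :=
  (∀ i j, (w i : ℕ) ≠ 0 → w i = w j → i = j) ∧
  (∀ i, (w i : ℕ) ≠ 0 → ∃ j : Fin n, (w j : ℕ) ≠ 0 ∧ (w i : ℕ) = (j : ℕ) + 1)

/-- The all-zero decorated permutation `θ`. -/
def isTheta {n : ℕ} (w : Fin n → Fin (n + 1)) : Prop := ∀ i, (w i : ℕ) = 0

/-- The number of excedances of a decorated permutation (positions `i` with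
`w_i > i`, in 1-based terms). -/
def dExc {n : ℕ} (w : Fin n → Fin (n + 1)) : ℕ :=
  (Finset.univ.filter (fun i : Fin n => (i : ℕ) + 1 < (w i : ℕ))).card

/-- `exc(w) + 1`, where `exc(θ) = -1`. -/
noncomputable def dExcP1 {n : ℕ} (w : Fin n → Fin (n + 1)) : ℕ :=
  if isTheta w then 0 else dExc w + 1

/-- The number of descents of the one-line word of a decorated permutation,
with respect to the order `0 < 1 < ⋯ < n`. -/
def dDes {n : ℕ} (w : Fin n → Fin (n + 1)) : ℕ :=
  ((Finset.range n).filter (fun i =>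
    ∃ h : i + 1 < n, (w ⟨i + 1, h⟩ : ℕ) < (w ⟨i, Nat.lt_of_succ_lt h⟩ : ℕ))).card

/-- The major index of the one-line word of a decorated permutation. -/
def dMaj {n : ℕ} (w : Fin n → Fin (n + 1)) : ℕ :=
  ∑ i ∈ (Finset.range n).filter (fun i =>
      ∃ h : i + 1 < n, (w ⟨i + 1, h⟩ : ℕ) < (w ⟨i, Nat.lt_of_succ_lt h⟩ : ℕ)), (i + 1)

/-- The number of excedances of `σ ∈ S_k`. -/
def excNum {k : ℕ} (σ : Equiv.Perm (Fin k)) : ℕ :=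
  (Finset.univ.filter (fun i : Fin k => (i : ℕ) < (σ i : ℕ))).card

noncomputable def toWord {n k : ℕ} (S : Finset (Fin n)) (h : S.card = k)
    (σ : Equiv.Perm (Fin k)) : Fin n → Fin (n + 1) :=
  fun i => if hi : i ∈ S then
    (((S.orderIsoOfFin h) (σ ((S.orderIsoOfFin h).symm ⟨i, hi⟩)) : Fin n)).succ else 0

lemma toWord_mem {n k : ℕ} (S : Finset (Fin n)) (h : S.card = k)
    (σ : Equiv.Perm (Fin k)) {i : Fin n} (hi : i ∈ S) :
    (toWord S h σ i : ℕ)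
      = ((S.orderIsoOfFin h) (σ ((S.orderIsoOfFin h).symm ⟨i, hi⟩)) : Fin n) + 1 := by
  simp [toWord, hi]

lemma toWord_not_mem {n k : ℕ} (S : Finset (Fin n)) (h : S.card = k)
    (σ : Equiv.Perm (Fin k)) {i : Fin n} (hi : i ∉ S) :
    (toWord S h σ i : ℕ) = 0 := by
  simp [toWord, hi]

lemma toWord_ne_zero_iff {n k : ℕ} (S : Finset (Fin n)) (h : S.card = k)
    (σ : Equiv.Perm (Fin k)) (i : Fin n) :
    (toWord S h σ i : ℕ) ≠ 0 ↔ i ∈ S := by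
  constructor
  · intro hne
    by_contra hi
    exact hne (toWord_not_mem S h σ hi)
  · intro hi
    rw [toWord_mem S h σ hi]
    omega

lemma toWord_supp {n k : ℕ} (S : Finset (Fin n)) (h : S.card = k)
    (σ : Equiv.Perm (Fin k)) :
    Finset.univ.filter (fun i => (toWord S h σ i : ℕ) ≠ 0) = S := by
  ext i
  simp only [Finset.mem_filter, Finset.mem_univ, true_and]
  exact toWord_ne_zero_iff S h σ i

lemma toWord_decorated {n k : ℕ} (S : Finset (Fin n)) (h : S.card = k)
    (σ : Equiv.Perm (Fin k)) : IsDecorated (toWord S h σ) := by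
  set f := S.orderIsoOfFin h with hf
  constructor
  · intro i j hne heq
    have hi : i ∈ S := (toWord_ne_zero_iff S h σ i).1 hne
    have hj : j ∈ S := by
      have : (toWord S h σ j : ℕ) ≠ 0 := by rw [← heq]; exact hne
      exact (toWord_ne_zero_iff S h σ j).1 this
    have hv : (toWord S h σ i : ℕ) = (toWord S h σ j : ℕ) := by rw [heq]
    rw [toWord_mem S h σ hi, toWord_mem S h σ hj, ← hf] at hv
    have h1 : (f (σ (f.symm ⟨i, hi⟩)) : Fin n) = (f (σ (f.symm ⟨j, hj⟩)) : Fin n) := by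
      exact Fin.ext (by omega)
    have h2 : f (σ (f.symm ⟨i, hi⟩)) = f (σ (f.symm ⟨j, hj⟩)) := Subtype.ext h1
    have h3 : (⟨i, hi⟩ : {x // x ∈ S}) = ⟨j, hj⟩ := by
      have := f.injective h2
      have := σ.injective this
      have := f.symm.injective this
      exact this
    exact congrArg Subtype.val h3
  · intro i hne
    have hi : i ∈ S := (toWord_ne_zero_iff S h σ i).1 hne
    refine ⟨(f (σ (f.symm ⟨i, hi⟩)) : Fin n), ?_, ?_⟩
    · rw [toWord_ne_zero_iff]
      exact (f (σ (f.symm ⟨i, hi⟩))).2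
    · exact toWord_mem S h σ hi

lemma toWord_exc {n k : ℕ} (S : Finset (Fin n)) (h : S.card = k)
    (σ : Equiv.Perm (Fin k)) : dExc (toWord S h σ) = excNum σ := by
  set f := S.orderIsoOfFin h with hf
  unfold dExc excNum
  symm
  apply Finset.card_bij (fun a _ => (f a : Fin n))
  · intro a ha
    simp only [Finset.mem_filter, Finset.mem_univ, true_and] at ha ⊢
    have hmem : (f a : Fin n) ∈ S := (f a).2
    rw [toWord_mem S h σ hmem, ← hf]
    have heq : f.symm ⟨(f a : Fin n), hmem⟩ = a := by
      apply f.injective; simp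
    rw [heq]
    have hlt : a < σ a := by
      rw [Fin.lt_def]; exact ha
    have h2 : f a < f (σ a) := f.lt_iff_lt.2 hlt
    have h3 : ((f a : Fin n) : ℕ) < ((f (σ a) : Fin n) : ℕ) := h2
    omega
  · intro a _ b _ hab
    exact f.injective (Subtype.ext hab)
  · intro i hi
    simp only [Finset.mem_filter, Finset.mem_univ, true_and] at hi
    have hne : (toWord S h σ i : ℕ) ≠ 0 := by omega
    have hmem : i ∈ S := (toWord_ne_zero_iff S h σ i).1 hne
    refine ⟨f.symm ⟨i, hmem⟩, ?_, by simp⟩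
    simp only [Finset.mem_filter, Finset.mem_univ, true_and]
    rw [toWord_mem S h σ hmem, ← hf] at hi
    have h3 : (i : ℕ) < (((f (σ (f.symm ⟨i, hmem⟩))) : Fin n) : ℕ) := by omega
    have hFin : (i : Fin n) < ((f (σ (f.symm ⟨i, hmem⟩))) : Fin n) := by
      rw [Fin.lt_def]; exact h3
    have h4 : (⟨i, hmem⟩ : {x // x ∈ S}) < f (σ (f.symm ⟨i, hmem⟩)) :=
      Subtype.coe_lt_coe.1 hFin
    have h5 : f.symm ⟨i, hmem⟩ < σ (f.symm ⟨i, hmem⟩) := by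
      have := f.symm.lt_iff_lt.2 h4
      simpa using this
    rw [Fin.lt_def] at h5
    exact h5

lemma toWord_inj {n k : ℕ} (S : Finset (Fin n)) (h : S.card = k)
    (σ τ : Equiv.Perm (Fin k)) (heq : toWord S h σ = toWord S h τ) : σ = τ := by
  set f := S.orderIsoOfFin h with hf
  apply Equiv.ext
  intro a
  have hmem : (f a : Fin n) ∈ S := (f a).2
  have h1 := toWord_mem S h σ hmem
  have h2 := toWord_mem S h τ hmem
  rw [heq] at h1
  rw [h2, ← hf] at h1
  have hsymm : f.symm ⟨(f a : Fin n), hmem⟩ = a := by apply f.injective; simp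
  rw [hsymm] at h1
  have : (f (τ a) : Fin n) = (f (σ a) : Fin n) := Fin.ext (by omega)
  exact (f.injective (Subtype.ext this)).symm

lemma toWord_surj {n k : ℕ} (S : Finset (Fin n)) (h : S.card = k)
    (w : Fin n → Fin (n + 1)) (hd : IsDecorated w)
    (hs : Finset.univ.filter (fun i => (w i : ℕ) ≠ 0) = S) :
    ∃ σ : Equiv.Perm (Fin k), toWord S h σ = w := by
  set f := S.orderIsoOfFin h with hf
  have hmem_iff : ∀ i : Fin n, i ∈ S ↔ (w i : ℕ) ≠ 0 := by
    intro i; rw [← hs]; simp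
  have hval : ∀ a : Fin k, ∃ j : Fin n, (w j : ℕ) ≠ 0 ∧ (w (f a : Fin n) : ℕ) = (j : ℕ) + 1 :=
    fun a => hd.2 _ ((hmem_iff _).1 (f a).2)
  set g : Fin k → Fin k := fun a =>
    f.symm ⟨(hval a).choose, (hmem_iff _).2 (hval a).choose_spec.1⟩ with hg
  have key : ∀ a : Fin k, (w (f a : Fin n) : ℕ) = ((f (g a) : Fin n) : ℕ) + 1 := by
    intro a
    have : f (g a) = ⟨(hval a).choose, (hmem_iff _).2 (hval a).choose_spec.1⟩ := by
      rw [hg]; simp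
    rw [this]
    exact (hval a).choose_spec.2
  have ginj : Function.Injective g := by
    intro a b hab
    have h1 := key a
    have h2 := key b
    rw [hab] at h1
    have hw : w (f a : Fin n) = w (f b : Fin n) := Fin.ext (by omega)
    have hne : (w (f a : Fin n) : ℕ) ≠ 0 := (hmem_iff _).1 (f a).2
    have := hd.1 _ _ hne hw
    exact f.injective (Subtype.ext this)
  refine ⟨Equiv.ofBijective g (Finite.injective_iff_bijective.1 ginj), ?_⟩
  funext i
  by_cases hi : i ∈ S
  · apply Fin.ext
    rw [toWord_mem S h _ hi, ← hf]
    have hofb : ∀ a, (Equiv.ofBijective g (Finite.injective_iff_bijective.1 ginj)) a = g a :=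
      fun a => rfl
    rw [hofb]
    have := key (f.symm ⟨i, hi⟩)
    have hff : f (f.symm ⟨i, hi⟩) = ⟨i, hi⟩ := by simp
    rw [hff, show ((⟨i, hi⟩ : {x // x ∈ S}) : Fin n) = i from rfl] at this
    omega
  · apply Fin.ext
    rw [toWord_not_mem S h _ hi]
    have : ¬ (w i : ℕ) ≠ 0 := fun hne => hi ((hmem_iff i).2 hne)
    omega

lemma fiber_sum {n k : ℕ} (S : Finset (Fin n)) (h : S.card = k) (hk : 0 < k) :
    ∑ w ∈ Finset.univ.filter (fun w : Fin n → Fin (n + 1) =>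
        IsDecorated w ∧ Finset.univ.filter (fun i => (w i : ℕ) ≠ 0) = S),
      (Polynomial.X : Polynomial ℕ) ^ dExcP1 w
    = ∑ σ : Equiv.Perm (Fin k), Polynomial.X ^ (excNum σ + 1) := by
  symm
  apply Finset.sum_bij (fun (σ : Equiv.Perm (Fin k)) _ => toWord S h σ)
  · intro σ _
    simp only [Finset.mem_filter, Finset.mem_univ, true_and]
    exact ⟨toWord_decorated S h σ, toWord_supp S h σ⟩
  · intro σ _ τ _ heq
    exact toWord_inj S h σ τ heq
  · intro w hw
    simp only [Finset.mem_filter, Finset.mem_univ, true_and] at hw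
    obtain ⟨σ, hσ⟩ := toWord_surj S h w hw.1 hw.2
    exact ⟨σ, Finset.mem_univ σ, hσ⟩
  · intro σ _
    have hnt : ¬ isTheta (toWord S h σ) := by
      intro hth
      have hSne : S.Nonempty := by
        rw [← Finset.card_pos, h]; exact hk
      obtain ⟨i, hi⟩ := hSne
      have := toWord_mem S h σ hi
      have := hth i
      omega
    rw [dExcP1, if_neg hnt, toWord_exc S h σ]

lemma empty_fiber (n : ℕ) :
    (Finset.univ.filter (fun w : Fin n → Fin (n + 1) =>
        IsDecorated w ∧ Finset.univ.filter (fun i => (w i : ℕ) ≠ 0) = (∅ : Finset (Fin n))))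
      = {fun _ => 0} := by
  ext w
  simp only [Finset.mem_filter, Finset.mem_univ, true_and, Finset.mem_singleton]
  constructor
  · rintro ⟨-, hsupp⟩
    funext i
    have : i ∉ (∅ : Finset (Fin n)) := Finset.notMem_empty i
    rw [← hsupp] at this
    simp only [Finset.mem_filter, Finset.mem_univ, true_and, not_not] at this
    exact Fin.ext this
  · rintro rfl
    refine ⟨⟨fun i j hn _ => absurd rfl hn, fun i hn => absurd rfl hn⟩, ?_⟩
    simp

/-- The binomial Eulerian polynomial
`Ã_n(t) = 1 + t·Σ_{k=1}^n C(n,k)·A_k(t)` (with `A_k(t) = Σ_{π ∈ S_k} t^{exc π}`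
the Eulerian polynomial) equals `Σ_{σ ∈ S̃_n} t^{exc(σ)+1}`, the generating
function of decorated permutations of `[n]` by `exc + 1`, where `exc(θ) = -1`. -/
theorem binomial_eulerian_decorated (n : ℕ) :
    (1 : Polynomial ℕ) + Polynomial.X *
        ∑ k ∈ Finset.Icc 1 n, Polynomial.C (n.choose k) *
          ∑ σ : Equiv.Perm (Fin k), Polynomial.X ^ excNum σ
      = ∑ w ∈ Finset.univ.filter (fun w : Fin n → Fin (n + 1) => IsDecorated w),
          Polynomial.X ^ dExcP1 w := by
  have step1 : ∑ w ∈ Finset.univ.filter (fun w : Fin n → Fin (n + 1) => IsDecorated w),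
      (Polynomial.X : Polynomial ℕ) ^ dExcP1 w
      = ∑ S : Finset (Fin n), ∑ w ∈ Finset.univ.filter (fun w : Fin n → Fin (n + 1) =>
          IsDecorated w ∧ Finset.univ.filter (fun i => (w i : ℕ) ≠ 0) = S),
          Polynomial.X ^ dExcP1 w := by
    rw [← Finset.sum_fiberwise_of_maps_to
      (g := fun w : Fin n → Fin (n + 1) => Finset.univ.filter (fun i => (w i : ℕ) ≠ 0))
      (t := (Finset.univ : Finset (Finset (Fin n))))
      (fun _ _ => Finset.mem_univ _)]
    apply Finset.sum_congr rfl
    intro S _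
    rw [Finset.filter_filter]
  rw [step1]
  rw [← Finset.add_sum_erase Finset.univ _ (Finset.mem_univ (∅ : Finset (Fin n)))]
  rw [empty_fiber n]
  have hz : (Polynomial.X : Polynomial ℕ) ^ dExcP1 (fun _ : Fin n => (0 : Fin (n + 1))) = 1 := by
    have : isTheta (fun _ : Fin n => (0 : Fin (n + 1))) := fun i => rfl
    rw [dExcP1, if_pos this, pow_zero]
  rw [Finset.sum_singleton, hz]
  congr 1
  have step2 : ∑ S ∈ Finset.univ.erase (∅ : Finset (Fin n)),
      ∑ w ∈ Finset.univ.filter (fun w : Fin n → Fin (n + 1) =>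
          IsDecorated w ∧ Finset.univ.filter (fun i => (w i : ℕ) ≠ 0) = S),
        (Polynomial.X : Polynomial ℕ) ^ dExcP1 w
      = ∑ S ∈ Finset.univ.erase (∅ : Finset (Fin n)),
          ∑ σ : Equiv.Perm (Fin S.card), Polynomial.X ^ (excNum σ + 1) := by
    apply Finset.sum_congr rfl
    intro S hS
    have hne : S ≠ ∅ := (Finset.mem_erase.1 hS).1
    have hk : 0 < S.card := Finset.card_pos.2 (Finset.nonempty_iff_ne_empty.2 hne)
    exact fiber_sum S rfl hk
  rw [step2]
  rw [← Finset.sum_fiberwise_of_maps_to (g := fun S : Finset (Fin n) => S.card)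
    (t := Finset.Icc 1 n) ?hmaps]
  case hmaps =>
    intro S hS
    have hne : S ≠ ∅ := (Finset.mem_erase.1 hS).1
    have h1 : 1 ≤ S.card := Finset.card_pos.2 (Finset.nonempty_iff_ne_empty.2 hne)
    have h2 : S.card ≤ n := by
      have := Finset.card_le_univ S
      simpa using this
    exact Finset.mem_Icc.2 ⟨h1, h2⟩
  rw [Finset.mul_sum]
  apply Finset.sum_congr rfl
  intro k hk
  have hk1 : 1 ≤ k := (Finset.mem_Icc.1 hk).1
  have hfilter : ((Finset.univ.erase (∅ : Finset (Fin n))).filter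
      (fun S : Finset (Fin n) => S.card = k)) = Finset.powersetCard k Finset.univ := by
    ext S
    simp only [Finset.mem_filter, Finset.mem_erase, Finset.mem_univ, true_and, and_true,
      Finset.mem_powersetCard_univ]
    constructor
    · rintro ⟨-, hc⟩; exact hc
    · intro hc
      refine ⟨?_, hc⟩
      intro hSe
      rw [hSe] at hc
      simp at hc
      omega
  have hinner : ∑ S ∈ (Finset.univ.erase (∅ : Finset (Fin n))).filter
      (fun S : Finset (Fin n) => S.card = k),
      ∑ σ : Equiv.Perm (Fin S.card), (Polynomial.X : Polynomial ℕ) ^ (excNum σ + 1)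
      = ∑ S ∈ (Finset.univ.erase (∅ : Finset (Fin n))).filter
      (fun S : Finset (Fin n) => S.card = k),
      ∑ σ : Equiv.Perm (Fin k), (Polynomial.X : Polynomial ℕ) ^ (excNum σ + 1) := by
    apply Finset.sum_congr rfl
    intro S hS
    have hc : S.card = k := (Finset.mem_filter.1 hS).2
    rw [hc]
  rw [hinner, Finset.sum_const, hfilter, Finset.card_powersetCard, Finset.card_univ,
    Fintype.card_fin, nsmul_eq_mul]
  rw [← Polynomial.C_eq_natCast]
  rw [Finset.mul_sum, Finset.mul_sum, Finset.mul_sum]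
  apply Finset.sum_congr rfl
  intro σ _
  rw [pow_succ]
  ring_nf
  simp [Nat.cast_id]
end

section
/- For every n ≥ 0, the q-binomial Eulerian polynomial Ã_n(q,t) := 1 + t·Σ_{k=1}^n [n choose k]_q·A_k(q,t) satisfies Ã_n(q,t) = Σ_{σ ∈ S̃_n} q^{maj(σ) − exc(σ)} t^{exc(σ)+1}, where the sum is over decorated permutations of [n]. -/
open scoped Classical

/-- `maj(w) - exc(w)` for a decorated permutation, with value `0` for `θ`
(since `maj(θ) = exc(θ) = -1`). -/
noncomputable def dMajSubExc {n : ℕ} (w : Fin n → Fin (n + 1)) : ℕ :=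
  if isTheta w then 0 else dMaj w - dExc w

/-- The major index of `σ ∈ S_k`. -/
def majNum {k : ℕ} (σ : Equiv.Perm (Fin k)) : ℕ :=
  ∑ i ∈ (Finset.range k).filter (fun i =>
      ∃ h : i + 1 < k, σ ⟨i + 1, h⟩ < σ ⟨i, Nat.lt_of_succ_lt h⟩), (i + 1)

/-- The `q`-integer `[j]_q` in the field of rational functions in `q`. -/
noncomputable def qInt (j : ℕ) : RatFunc ℚ := ∑ i ∈ Finset.range j, RatFunc.X ^ i

/-- The `q`-factorial `[j]_q!`. -/
noncomputable def qFact (j : ℕ) : RatFunc ℚ := ∏ i ∈ Finset.Icc 1 j, qInt i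

/-- The Gaussian binomial coefficient `[n choose k]_q = [n]_q!/([k]_q![n-k]_q!)`. -/
noncomputable def qBinom (n k : ℕ) : RatFunc ℚ := qFact n / (qFact k * qFact (n - k))

/-- The `q`-Eulerian polynomial
`A_k(q,t) = Σ_{π ∈ S_k} q^{maj π - exc π} t^{exc π}`, as a polynomial in `t`
with coefficients rational functions in `q`. -/
noncomputable def qEulerian (k : ℕ) : Polynomial (RatFunc ℚ) :=
  ∑ σ : Equiv.Perm (Fin k),
    Polynomial.C ((RatFunc.X : RatFunc ℚ) ^ (majNum σ - excNum σ)) *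
      Polynomial.X ^ excNum σ

lemma qInt_eq_algebraMap (j : ℕ) :
    qInt j = algebraMap (Polynomial ℚ) (RatFunc ℚ) (∑ i ∈ Finset.range j, Polynomial.X ^ i) := by
  simp [qInt, map_sum, map_pow, RatFunc.algebraMap_X]

lemma qInt_ne_zero {j : ℕ} (hj : 1 ≤ j) : qInt j ≠ 0 := by
  rw [qInt_eq_algebraMap]
  intro h
  have h2 : (∑ i ∈ Finset.range j, (Polynomial.X : Polynomial ℚ) ^ i) = 0 := by
    apply RatFunc.algebraMap_injective ℚ
    simpa using h
  have h3 : (∑ i ∈ Finset.range j, (Polynomial.X : Polynomial ℚ) ^ i).coeff 0 = 1 := by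
    rw [Polynomial.finset_sum_coeff]
    rw [Finset.sum_eq_single 0]
    · simp
    · intro b _ hb; simp [Polynomial.coeff_X_pow]; omega
    · intro h; exact absurd (Finset.mem_range.2 hj) h
  rw [h2] at h3; simp at h3

lemma qFact_succ (j : ℕ) : qFact (j + 1) = qFact j * qInt (j + 1) := by
  rw [qFact, qFact, Finset.prod_Icc_succ_top (by omega)]

lemma qFact_ne_zero (j : ℕ) : qFact j ≠ 0 := by
  rw [qFact]
  apply Finset.prod_ne_zero_iff.2
  intro i hi
  exact qInt_ne_zero (Finset.mem_Icc.1 hi).1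

lemma qInt_add (a b : ℕ) : qInt (a + b) = qInt a + RatFunc.X ^ a * qInt b := by
  rw [qInt, qInt, qInt, Finset.sum_range_add, Finset.mul_sum]
  congr 1
  exact Finset.sum_congr rfl fun i _ => by rw [pow_add]

lemma qBinom_zero (n : ℕ) : qBinom n 0 = 1 := by
  rw [qBinom]
  simp only [Nat.sub_zero]
  rw [show qFact 0 = 1 from by simp [qFact], one_mul, div_self (qFact_ne_zero n)]

lemma qBinom_self (n : ℕ) : qBinom n n = 1 := by
  rw [qBinom]
  simp only [Nat.sub_self]
  rw [show qFact 0 = 1 from by simp [qFact], mul_one, div_self (qFact_ne_zero n)]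

lemma qBinom_symm {n k : ℕ} (h : k ≤ n) : qBinom n k = qBinom n (n - k) := by
  rw [qBinom, qBinom, Nat.sub_sub_self h, mul_comm]

lemma pascalB (b G : ℕ) :
    qBinom (G + b + 2) (b + 1) = qBinom (G + b + 1) (b + 1) + RatFunc.X ^ (G + 1) * qBinom (G + b + 1) b := by
  rw [qBinom, qBinom, qBinom]
  rw [show G + b + 2 - (b + 1) = G + 1 from by omega,
      show G + b + 1 - (b + 1) = G from by omega,
      show G + b + 1 - b = G + 1 from by omega]
  rw [show G + b + 2 = (G + b + 1) + 1 from by omega, qFact_succ,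
      show (G + 1 : ℕ) = G + 1 from rfl]
  have hq1 : qFact (G + 1) = qFact G * qInt (G + 1) := qFact_succ G
  have hq2 : qFact (b + 1) = qFact b * qInt (b + 1) := qFact_succ b
  have key : qInt (G + b + 1 + 1) = qInt (G + 1) + RatFunc.X ^ (G + 1) * qInt (b + 1) := by
    rw [show G + b + 1 + 1 = (G + 1) + (b + 1) from by omega]; exact qInt_add _ _
  rw [key, hq1, hq2]
  have h1 := qFact_ne_zero (G + b + 1)
  have h2 := qFact_ne_zero b
  have h3 := qFact_ne_zero G
  have h4 := qInt_ne_zero (show 1 ≤ G + 1 from by omega)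
  have h5 := qInt_ne_zero (show 1 ≤ b + 1 from by omega)
  field_simp

lemma pascalA (b G : ℕ) :
    qBinom (G + b + 2) (b + 1) = qBinom (G + b + 1) b + RatFunc.X ^ (b + 1) * qBinom (G + b + 1) (b + 1) := by
  have s1 : qBinom (G + b + 2) (b + 1) = qBinom (G + b + 2) (G + 1) := by
    rw [qBinom_symm (show b + 1 ≤ G + b + 2 from by omega),
        show G + b + 2 - (b + 1) = G + 1 from by omega]
  have s2 : qBinom (G + b + 1) b = qBinom (G + b + 1) (G + 1) := by
    rw [qBinom_symm (show b ≤ G + b + 1 from by omega),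
        show G + b + 1 - b = G + 1 from by omega]
  have s3 : qBinom (G + b + 1) (b + 1) = qBinom (G + b + 1) G := by
    rw [qBinom_symm (show b + 1 ≤ G + b + 1 from by omega),
        show G + b + 1 - (b + 1) = G from by omega]
  rw [s1, s2, s3]
  have := pascalB G b
  rw [show b + G + 2 = G + b + 2 from by omega, show b + G + 1 = G + b + 1 from by omega] at this
  exact this

lemma hockey1 (b G : ℕ) :
    ∑ g ∈ Finset.range (G + 1), RatFunc.X ^ g * qBinom (g + b) b = qBinom (G + b + 1) (b + 1) := by
  induction G with
  | zero => simp [qBinom_self]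
  | succ G ih =>
    rw [Finset.sum_range_succ, ih, show G + 1 + b + 1 = G + b + 2 from by omega, pascalB b G,
        show G + 1 + b = G + b + 1 from by omega]

lemma hockey2 (b G : ℕ) :
    qBinom (G + b) b + ∑ g ∈ Finset.range G, RatFunc.X ^ (g + b + 1) * qBinom (g + b) b
      = qBinom (G + b + 1) (b + 1) := by
  cases G with
  | zero => simp [qBinom_self]
  | succ G =>
    rw [show G + 1 + b = G + b + 1 from by omega,
        show G + b + 1 + 1 = G + b + 2 from by omega, pascalA b G, ← hockey1 b G, Finset.mul_sum]
    congr 1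
    apply Finset.sum_congr rfl
    intro g _
    rw [pow_add]
    ring

/-! ### Part 2: the statistic and the key lemma -/

noncomputable def tstat (k o m : ℕ) (d : ℕ → Bool) (g : Fin k → Fin (m + 1)) : ℕ :=
  ∑ a : Fin k,
    if h : (a : ℕ) + 1 < k then
      (if d a then (g a : ℕ)
       else if (g a : ℕ) < (g ⟨(a : ℕ) + 1, h⟩ : ℕ) then (g a : ℕ) + ((a : ℕ) + 1 + o) else 0)
    else (if (g a : ℕ) < m then (g a : ℕ) + (k + o) else 0)

noncomputable def monoSet (k m : ℕ) : Finset (Fin k → Fin (m + 1)) :=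
  Finset.univ.filter Monotone

lemma monotone_cons_iff {k m : ℕ} (x : Fin (m + 1)) (g : Fin (k + 1) → Fin (m + 1)) :
    Monotone (Fin.cons x g : Fin (k + 2) → Fin (m + 1)) ↔ x ≤ g 0 ∧ Monotone g := by
  constructor
  · intro h
    constructor
    · have := h (show (0 : Fin (k + 2)) ≤ (0 : Fin (k + 1)).succ from by
        rw [Fin.le_def]; simp)
      simpa using this
    · intro a b hab
      have := h (show a.succ ≤ b.succ from by
        rw [Fin.le_def] at hab ⊢; simpa using hab)
      simpa using this
  · rintro ⟨hx, hg⟩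
    intro a b hab
    induction a using Fin.cases with
    | zero =>
      induction b using Fin.cases with
      | zero => exact le_refl _
      | succ b =>
        simp only [Fin.cons_zero, Fin.cons_succ]
        exact le_trans hx (hg (Fin.zero_le b))
    | succ a =>
      induction b using Fin.cases with
      | zero =>
        exfalso; rw [Fin.le_def] at hab; simp at hab
      | succ b =>
        simp only [Fin.cons_succ]
        apply hg
        rw [Fin.le_def] at hab ⊢; simpa using hab

lemma tstat_cons {k o m : ℕ} (d : ℕ → Bool) (x : Fin (m + 1)) (g : Fin (k + 1) → Fin (m + 1)) :
    tstat (k + 2) o m d (Fin.cons x g)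
      = (if d 0 then (x : ℕ) else if (x : ℕ) < (g 0 : ℕ) then (x : ℕ) + (1 + o) else 0)
        + tstat (k + 1) (o + 1) m (fun a => d (a + 1)) g := by
  rw [tstat, Fin.sum_univ_succ]
  congr 1
  · rw [tstat]
    apply Finset.sum_congr rfl
    intro a _
    have hv : ((a.succ : Fin (k + 2)) : ℕ) = (a : ℕ) + 1 := Fin.val_succ a
    by_cases h1 : (a : ℕ) + 1 < k + 1
    · rw [dif_pos (show ((a.succ : Fin (k+2)) : ℕ) + 1 < k + 2 from by omega), dif_pos h1]
      have ec : (Fin.cons x g : Fin (k+2) → Fin (m+1)) a.succ = g a := Fin.cons_succ _ _ _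
      have ec2 : (Fin.cons x g : Fin (k+2) → Fin (m+1)) ⟨((a.succ : Fin (k+2)) : ℕ) + 1, by omega⟩
          = g ⟨(a : ℕ) + 1, h1⟩ := by
        rw [show (⟨((a.succ : Fin (k+2)) : ℕ) + 1, by omega⟩ : Fin (k+2))
            = (⟨(a : ℕ) + 1, h1⟩ : Fin (k+1)).succ from by
          apply Fin.ext; simp, Fin.cons_succ]
      rw [ec, ec2, hv]
      split_ifs with hd hlt
      · rfl
      · omega
      · rfl
    · rw [dif_neg (show ¬(((a.succ : Fin (k+2)) : ℕ) + 1 < k + 2) from by omega), dif_neg h1]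
      have ec : (Fin.cons x g : Fin (k+2) → Fin (m+1)) a.succ = g a := Fin.cons_succ _ _ _
      rw [ec]
      split_ifs
      · omega
      · rfl

lemma innerSumL (o m : ℕ) (G : Fin (m + 1)) (b : Bool) :
    ∑ x : Fin (m + 1), (if x ≤ G then
        qBinom ((x : ℕ) + o) o * RatFunc.X ^
          (if b then (x : ℕ) else if (x : ℕ) < (G : ℕ) then (x : ℕ) + (1 + o) else 0)
      else 0) = qBinom ((G : ℕ) + (o + 1)) (o + 1) := by
  have h1 : ∀ x : Fin (m + 1), (if x ≤ G then
        qBinom ((x : ℕ) + o) o * RatFunc.X ^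
          (if b then (x : ℕ) else if (x : ℕ) < (G : ℕ) then (x : ℕ) + (1 + o) else 0)
      else 0) = (if (x : ℕ) ≤ (G : ℕ) then
        qBinom ((x : ℕ) + o) o * RatFunc.X ^
          (if b then (x : ℕ) else if (x : ℕ) < (G : ℕ) then (x : ℕ) + (1 + o) else 0)
      else 0) := by
    intro x
    by_cases hx : x ≤ G
    · rw [if_pos hx, if_pos (show (x : ℕ) ≤ (G : ℕ) from by rwa [Fin.le_def] at hx)]
    · rw [if_neg hx, if_neg (show ¬ (x : ℕ) ≤ (G : ℕ) from by rwa [Fin.le_def] at hx)]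
  rw [Finset.sum_congr rfl (fun x _ => h1 x),
    Fin.sum_univ_eq_sum_range (fun j : ℕ => if j ≤ (G : ℕ) then
        qBinom (j + o) o * RatFunc.X ^
          (if b then j else if j < (G : ℕ) then j + (1 + o) else 0)
      else 0) (m + 1)]
  have hsub : Finset.range ((G : ℕ) + 1) ⊆ Finset.range (m + 1) := by
    apply Finset.range_subset_range.2; have := G.2; omega
  rw [← Finset.sum_subset hsub (by intro j _ hj; rw [Finset.mem_range] at hj; rw [if_neg (by omega)])]
  have h2 : ∀ j ∈ Finset.range ((G : ℕ) + 1), (if j ≤ (G : ℕ) then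
        qBinom (j + o) o * RatFunc.X ^
          (if b then j else if j < (G : ℕ) then j + (1 + o) else 0)
      else 0) = qBinom (j + o) o * RatFunc.X ^
          (if b then j else if j < (G : ℕ) then j + (1 + o) else 0) := by
    intro j hj; rw [Finset.mem_range] at hj; rw [if_pos (by omega)]
  rw [Finset.sum_congr rfl h2]
  cases b with
  | true =>
    simp only [if_true]
    rw [show (G : ℕ) + (o + 1) = (G : ℕ) + o + 1 from by omega, ← hockey1 o (G : ℕ)]
    apply Finset.sum_congr rfl
    intro j _
    rw [mul_comm]
  | false =>
    simp only [Bool.false_eq_true, if_false]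
    rw [Finset.sum_range_succ, if_neg (lt_irrefl _), pow_zero, mul_one,
      show (G : ℕ) + (o + 1) = (G : ℕ) + o + 1 from by omega, ← hockey2 o (G : ℕ), add_comm]
    congr 1
    apply Finset.sum_congr rfl
    intro j hj
    rw [Finset.mem_range] at hj
    rw [if_pos hj, mul_comm, show j + (1 + o) = j + o + 1 from by omega]

lemma key (m : ℕ) : ∀ (k o : ℕ) (d : ℕ → Bool),
    ∑ g ∈ monoSet (k + 1) m, qBinom ((g 0 : ℕ) + o) o * RatFunc.X ^ tstat (k + 1) o m d g
      = qBinom (m + (k + 1) + o) ((k + 1) + o) := by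
  intro k
  induction k with
  | zero =>
    intro o d
    show ∑ g ∈ monoSet 1 m, qBinom ((g 0 : ℕ) + o) o * RatFunc.X ^ tstat 1 o m d g
      = qBinom (m + 1 + o) (1 + o)
    have hms : monoSet 1 m = Finset.univ := by
      rw [monoSet, Finset.filter_true_of_mem]
      intro g _ a b _
      rw [Subsingleton.elim a b]
    rw [hms]
    have hts : ∀ g : Fin 1 → Fin (m + 1),
        tstat 1 o m d g = if (g 0 : ℕ) < m then (g 0 : ℕ) + (1 + o) else 0 := by
      intro g
      rw [tstat, Fin.sum_univ_one]
      rw [dif_neg (by norm_num)]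
    rw [← Equiv.sum_comp (Equiv.funUnique (Fin 1) (Fin (m + 1))).symm
        (fun g : Fin 1 → Fin (m + 1) => qBinom ((g 0 : ℕ) + o) o * RatFunc.X ^ tstat 1 o m d g)]
    have step1 : ∀ x : Fin (m + 1),
        qBinom ((((Equiv.funUnique (Fin 1) (Fin (m + 1))).symm x) 0 : ℕ) + o) o *
            RatFunc.X ^ tstat 1 o m d ((Equiv.funUnique (Fin 1) (Fin (m + 1))).symm x)
          = qBinom ((x : ℕ) + o) o * RatFunc.X ^
              (if (x : ℕ) < m then (x : ℕ) + (1 + o) else 0) := by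
      intro x
      rw [hts ((Equiv.funUnique (Fin 1) (Fin (m + 1))).symm x)]
      rfl
    rw [Finset.sum_congr rfl (fun x _ => step1 x),
      Fin.sum_univ_eq_sum_range (fun j : ℕ => qBinom (j + o) o * RatFunc.X ^
              (if j < m then j + (1 + o) else 0)) (m + 1),
      Finset.sum_range_succ, if_neg (lt_irrefl _), pow_zero, mul_one,
      show m + 1 + o = m + o + 1 from by omega, show 1 + o = o + 1 from by omega,
      ← hockey2 o m, add_comm]
    congr 1
    apply Finset.sum_congr rfl
    intro j hj
    rw [Finset.mem_range] at hj
    rw [if_pos hj, mul_comm, show j + (o + 1) = j + o + 1 from by omega]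
  | succ k ih =>
    intro o d
    show ∑ g ∈ monoSet (k + 2) m, qBinom ((g 0 : ℕ) + o) o * RatFunc.X ^ tstat (k + 2) o m d g
      = qBinom (m + (k + 2) + o) ((k + 2) + o)
    have e1 : ∑ g ∈ monoSet (k + 2) m, qBinom ((g 0 : ℕ) + o) o * RatFunc.X ^ tstat (k + 2) o m d g
        = ∑ w : Fin (k + 2) → Fin (m + 1), (if Monotone w then
            qBinom ((w 0 : ℕ) + o) o * RatFunc.X ^ tstat (k + 2) o m d w else 0) := by
      rw [monoSet, Finset.sum_filter]
    have e2 : (∑ w : Fin (k + 2) → Fin (m + 1), (if Monotone w then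
            qBinom ((w 0 : ℕ) + o) o * RatFunc.X ^ tstat (k + 2) o m d w else 0))
        = ∑ p : Fin (m + 1) × (Fin (k + 1) → Fin (m + 1)),
            (if Monotone (Fin.cons p.1 p.2 : Fin (k + 2) → Fin (m + 1)) then
              qBinom (((Fin.cons p.1 p.2 : Fin (k + 2) → Fin (m + 1)) 0 : ℕ) + o) o *
                RatFunc.X ^ tstat (k + 2) o m d (Fin.cons p.1 p.2) else 0) := by
      rw [← Equiv.sum_comp (Fin.consEquiv (fun _ : Fin (k + 2) => Fin (m + 1)))
        (fun w : Fin (k + 2) → Fin (m + 1) => (if Monotone w then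
            qBinom ((w 0 : ℕ) + o) o * RatFunc.X ^ tstat (k + 2) o m d w else 0))]
      exact Finset.sum_congr rfl (fun p _ => rfl)
    have step2 : ∀ g : Fin (k + 1) → Fin (m + 1),
        (∑ x : Fin (m + 1), if Monotone (Fin.cons x g : Fin (k + 2) → Fin (m + 1)) then
          qBinom (((Fin.cons x g : Fin (k + 2) → Fin (m + 1)) 0 : ℕ) + o) o *
            RatFunc.X ^ tstat (k + 2) o m d (Fin.cons x g) else 0)
        = (if Monotone g then
            qBinom ((g 0 : ℕ) + (o + 1)) (o + 1) *
              RatFunc.X ^ tstat (k + 1) (o + 1) m (fun a => d (a + 1)) g else 0) := by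
      intro g
      by_cases hg : Monotone g
      · rw [if_pos hg, ← innerSumL o m (g 0) (d 0), Finset.sum_mul]
        apply Finset.sum_congr rfl
        intro x _
        simp only [monotone_cons_iff]
        by_cases hx : x ≤ g 0
        · rw [if_pos ⟨hx, hg⟩, if_pos hx, Fin.cons_zero, tstat_cons, pow_add, mul_assoc]
        · rw [if_neg (fun h => hx h.1), if_neg hx, zero_mul]
      · rw [if_neg hg]
        apply Finset.sum_eq_zero
        intro x _
        simp only [monotone_cons_iff]
        rw [if_neg (fun h => hg h.2)]
    have e4 : (∑ g : Fin (k + 1) → Fin (m + 1), if Monotone g then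
            qBinom ((g 0 : ℕ) + (o + 1)) (o + 1) *
              RatFunc.X ^ tstat (k + 1) (o + 1) m (fun a => d (a + 1)) g else 0)
        = ∑ g ∈ monoSet (k + 1) m, qBinom ((g 0 : ℕ) + (o + 1)) (o + 1) *
              RatFunc.X ^ tstat (k + 1) (o + 1) m (fun a => d (a + 1)) g := by
      rw [monoSet, Finset.sum_filter]
    rw [e1, e2, Fintype.sum_prod_type, Finset.sum_comm,
      Finset.sum_congr rfl (fun g _ => step2 g), e4, ih (o + 1) (fun a => d (a + 1)),
      show m + (k + 1) + (o + 1) = m + (k + 2) + o from by omega,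
      show k + 1 + (o + 1) = k + 2 + o from by omega]

/-! ### Part 3: decorated permutations -/










section Enc

variable {n k : ℕ}

/-- The positions of the support, from the bound-gap encoding. -/
def pmap (hkn : k ≤ n) (g : Fin k → Fin (n - k + 1)) (a : Fin k) : Fin n :=
  ⟨(g a : ℕ) + (a : ℕ), by
    have h1 := (g a).isLt
    have h2 := a.isLt
    omega⟩

lemma pmap_val (hkn : k ≤ n) (g : Fin k → Fin (n - k + 1)) (a : Fin k) :
    (pmap hkn g a : ℕ) = (g a : ℕ) + (a : ℕ) := rfl

lemma pmap_strictMono (hkn : k ≤ n) {g : Fin k → Fin (n - k + 1)} (hg : Monotone g) :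
    StrictMono (pmap hkn g) := by
  intro a b hab
  have h1 : (g a : ℕ) ≤ (g b : ℕ) := hg hab.le
  rw [Fin.lt_def] at hab ⊢
  rw [pmap_val, pmap_val]
  omega

/-- The decorated permutation encoded by `(g, σ)`. -/
noncomputable def enc (hkn : k ≤ n) (g : Fin k → Fin (n - k + 1)) (σ : Equiv.Perm (Fin k)) :
    Fin n → Fin (n + 1) :=
  Function.extend (pmap hkn g) (fun a => (pmap hkn g (σ a)).succ) (fun _ => 0)

lemma enc_apply (hkn : k ≤ n) {g : Fin k → Fin (n - k + 1)} (hg : Monotone g)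
    (σ : Equiv.Perm (Fin k)) (a : Fin k) :
    enc hkn g σ (pmap hkn g a) = (pmap hkn g (σ a)).succ :=
  Function.Injective.extend_apply (pmap_strictMono hkn hg).injective _ _ a

lemma enc_apply' (hkn : k ≤ n) (g : Fin k → Fin (n - k + 1)) (σ : Equiv.Perm (Fin k))
    (i : Fin n) (h : ¬ ∃ a, pmap hkn g a = i) : enc hkn g σ i = 0 :=
  Function.extend_apply' _ _ _ h

lemma enc_ne_zero (hkn : k ≤ n) {g : Fin k → Fin (n - k + 1)} (hg : Monotone g)
    (σ : Equiv.Perm (Fin k)) (i : Fin n) :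
    (enc hkn g σ i : ℕ) ≠ 0 ↔ ∃ a, pmap hkn g a = i := by
  constructor
  · intro hne
    by_contra h
    rw [enc_apply' hkn g σ i h] at hne
    simp at hne
  · rintro ⟨a, rfl⟩
    rw [enc_apply hkn hg σ a, Fin.val_succ]
    omega

lemma enc_decorated (hkn : k ≤ n) {g : Fin k → Fin (n - k + 1)} (hg : Monotone g)
    (σ : Equiv.Perm (Fin k)) : IsDecorated (enc hkn g σ) := by
  constructor
  · intro i j hi hij
    obtain ⟨a, rfl⟩ := (enc_ne_zero hkn hg σ i).1 hi
    have hj : (enc hkn g σ j : ℕ) ≠ 0 := by rw [← hij]; exact hi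
    obtain ⟨b, rfl⟩ := (enc_ne_zero hkn hg σ j).1 hj
    rw [enc_apply hkn hg σ a, enc_apply hkn hg σ b] at hij
    have : σ a = σ b := (pmap_strictMono hkn hg).injective (Fin.succ_injective _ hij)
    rw [σ.injective this]
  · intro i hi
    obtain ⟨a, rfl⟩ := (enc_ne_zero hkn hg σ i).1 hi
    refine ⟨pmap hkn g (σ a), ?_, ?_⟩
    · rw [enc_ne_zero hkn hg σ]; exact ⟨σ a, rfl⟩
    · rw [enc_apply hkn hg σ a, Fin.val_succ]

lemma enc_not_theta (hk1 : 1 ≤ k) (hkn : k ≤ n) {g : Fin k → Fin (n - k + 1)} (hg : Monotone g)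
    (σ : Equiv.Perm (Fin k)) : ¬ isTheta (enc hkn g σ) := by
  intro h
  have a0 : Fin k := ⟨0, hk1⟩
  have := h (pmap hkn g a0)
  rw [enc_apply hkn hg σ a0, Fin.val_succ] at this
  omega

lemma enc_supp (hkn : k ≤ n) {g : Fin k → Fin (n - k + 1)} (hg : Monotone g)
    (σ : Equiv.Perm (Fin k)) :
    Finset.univ.filter (fun i : Fin n => (enc hkn g σ i : ℕ) ≠ 0)
      = Finset.image (pmap hkn g) Finset.univ := by
  ext i
  simp only [Finset.mem_filter, Finset.mem_univ, true_and, Finset.mem_image]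
  rw [enc_ne_zero hkn hg σ]

lemma enc_supp_card (hkn : k ≤ n) {g : Fin k → Fin (n - k + 1)} (hg : Monotone g)
    (σ : Equiv.Perm (Fin k)) :
    (Finset.univ.filter (fun i : Fin n => (enc hkn g σ i : ℕ) ≠ 0)).card = k := by
  rw [enc_supp hkn hg σ, Finset.card_image_of_injective _ (pmap_strictMono hkn hg).injective,
    Finset.card_univ, Fintype.card_fin]

lemma enc_dExc (hkn : k ≤ n) {g : Fin k → Fin (n - k + 1)} (hg : Monotone g)
    (σ : Equiv.Perm (Fin k)) : dExc (enc hkn g σ) = excNum σ := by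
  rw [dExc, excNum]
  have hset : Finset.univ.filter (fun i : Fin n => (i : ℕ) + 1 < (enc hkn g σ i : ℕ))
      = Finset.image (pmap hkn g) (Finset.univ.filter (fun a : Fin k => (a : ℕ) < (σ a : ℕ))) := by
    ext i
    simp only [Finset.mem_filter, Finset.mem_univ, true_and, Finset.mem_image]
    constructor
    · intro hi
      have hne : (enc hkn g σ i : ℕ) ≠ 0 := by omega
      obtain ⟨a, rfl⟩ := (enc_ne_zero hkn hg σ i).1 hne
      refine ⟨a, ?_, rfl⟩
      rw [enc_apply hkn hg σ a, Fin.val_succ] at hi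
      simp only [pmap_val] at hi
      have h2 : (pmap hkn g a : ℕ) < (pmap hkn g (σ a) : ℕ) := by
        simp only [pmap_val]; omega
      have h3 : pmap hkn g a < pmap hkn g (σ a) := by rwa [Fin.lt_def]
      have := (pmap_strictMono hkn hg).lt_iff_lt.1 h3
      rwa [Fin.lt_def] at this
    · rintro ⟨a, ha, rfl⟩
      rw [enc_apply hkn hg σ a, Fin.val_succ]
      have h3 : pmap hkn g a < pmap hkn g (σ a) :=
        (pmap_strictMono hkn hg) (by rwa [Fin.lt_def])
      rw [Fin.lt_def] at h3
      omega
  rw [hset, Finset.card_image_of_injective _ (pmap_strictMono hkn hg).injective]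

end Enc

section Maj

variable {n k : ℕ}

/-- Descent pattern of a permutation. -/
def dpat {k : ℕ} (σ : Equiv.Perm (Fin k)) : ℕ → Bool := fun a =>
  if h : a + 1 < k then decide (σ ⟨a + 1, h⟩ < σ ⟨a, Nat.lt_of_succ_lt h⟩) else false

/-- The condition for the word of `(g,σ)` to have a descent at position `pmap a`. -/
def Acond (hkn : k ≤ n) (g : Fin k → Fin (n - k + 1)) (σ : Equiv.Perm (Fin k)) (a : Fin k) :
    Prop :=
  if h : (a : ℕ) + 1 < k then
    ((pmap hkn g ⟨(a : ℕ) + 1, h⟩ : ℕ) = (pmap hkn g a : ℕ) + 1 → σ ⟨(a : ℕ) + 1, h⟩ < σ a)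
  else ((pmap hkn g a : ℕ) + 1 < n)

lemma descent_set_eq (hkn : k ≤ n) {g : Fin k → Fin (n - k + 1)} (hg : Monotone g)
    (σ : Equiv.Perm (Fin k)) :
    (Finset.range n).filter (fun i =>
        ∃ h : i + 1 < n, (enc hkn g σ ⟨i + 1, h⟩ : ℕ) < (enc hkn g σ ⟨i, Nat.lt_of_succ_lt h⟩ : ℕ))
      = Finset.image (fun a : Fin k => (pmap hkn g a : ℕ))
          (Finset.univ.filter (Acond hkn g σ)) := by
  have hpinj := (pmap_strictMono hkn hg).injective
  ext i
  simp only [Finset.mem_filter, Finset.mem_range, Finset.mem_image, Finset.mem_univ, true_and]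
  constructor
  · rintro ⟨hin, h1, hw⟩
    have heta : (⟨i, Nat.lt_of_succ_lt h1⟩ : Fin n) = ⟨i, Nat.lt_of_succ_lt h1⟩ := rfl
    have hne : (enc hkn g σ ⟨i, Nat.lt_of_succ_lt h1⟩ : ℕ) ≠ 0 := by omega
    obtain ⟨a, ha⟩ := (enc_ne_zero hkn hg σ _).1 hne
    have hai : (pmap hkn g a : ℕ) = i := by rw [ha]
    refine ⟨a, ?_, hai⟩
    rw [Acond]
    by_cases hk2 : (a : ℕ) + 1 < k
    · rw [dif_pos hk2]
      intro heq
      have hfe : (⟨i + 1, h1⟩ : Fin n) = pmap hkn g ⟨(a : ℕ) + 1, hk2⟩ := by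
        apply Fin.ext
        simp only []
        omega
      rw [hfe, ← ha, enc_apply hkn hg σ, enc_apply hkn hg σ, Fin.val_succ, Fin.val_succ] at hw
      have hlt : pmap hkn g (σ ⟨(a : ℕ) + 1, hk2⟩) < pmap hkn g (σ a) := by
        rw [Fin.lt_def]; omega
      exact (pmap_strictMono hkn hg).lt_iff_lt.1 hlt
    · rw [dif_neg hk2]
      omega
  · rintro ⟨a, hA, rfl⟩
    rw [Acond] at hA
    have hpa : (pmap hkn g a : ℕ) = (g a : ℕ) + (a : ℕ) := rfl
    have h1 : (pmap hkn g a : ℕ) + 1 < n := by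
      by_cases hk2 : (a : ℕ) + 1 < k
      · have := (pmap_strictMono hkn hg) (show a < ⟨(a : ℕ) + 1, hk2⟩ from by
          rw [Fin.lt_def]; simp)
        rw [Fin.lt_def] at this
        have := (pmap hkn g ⟨(a : ℕ) + 1, hk2⟩).isLt
        omega
      · rw [dif_neg hk2] at hA
        exact hA
    refine ⟨(pmap hkn g a).isLt, h1, ?_⟩
    have heta : (⟨(pmap hkn g a : ℕ), Nat.lt_of_succ_lt h1⟩ : Fin n) = pmap hkn g a :=
      Fin.ext rfl
    rw [heta, enc_apply hkn hg σ, Fin.val_succ]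
    by_cases hmem : ∃ b, pmap hkn g b = (⟨(pmap hkn g a : ℕ) + 1, h1⟩ : Fin n)
    · obtain ⟨b, hb⟩ := hmem
      have hbv : (pmap hkn g b : ℕ) = (pmap hkn g a : ℕ) + 1 := by rw [hb]
      have hab : a < b := by
        apply (pmap_strictMono hkn hg).lt_iff_lt.1
        rw [Fin.lt_def]; omega
      have hk2 : (a : ℕ) + 1 < k := by
        rw [Fin.lt_def] at hab
        have := b.isLt
        omega
      have hble : pmap hkn g ⟨(a : ℕ) + 1, hk2⟩ ≤ pmap hkn g b := by
        apply (pmap_strictMono hkn hg).monotone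
        rw [Fin.le_def]
        rw [Fin.lt_def] at hab
        simpa using hab
      have hgt : pmap hkn g a < pmap hkn g ⟨(a : ℕ) + 1, hk2⟩ := by
        apply pmap_strictMono hkn hg
        rw [Fin.lt_def]; simp
      have hbeq : (⟨(a : ℕ) + 1, hk2⟩ : Fin k) = b := by
        apply hpinj
        apply Fin.ext
        rw [Fin.le_def] at hble
        rw [Fin.lt_def] at hgt
        omega
      have heq : (pmap hkn g ⟨(a : ℕ) + 1, hk2⟩ : ℕ) = (pmap hkn g a : ℕ) + 1 := by
        rw [hbeq]; omega
      rw [dif_pos hk2] at hA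
      have hlt : σ ⟨(a : ℕ) + 1, hk2⟩ < σ a := hA heq
      have : pmap hkn g (σ ⟨(a : ℕ) + 1, hk2⟩) < pmap hkn g (σ a) :=
        (pmap_strictMono hkn hg) hlt
      rw [← hb, ← hbeq] at *
      rw [enc_apply hkn hg σ, Fin.val_succ]
      rw [Fin.lt_def] at this
      omega
    · rw [enc_apply' hkn g σ _ hmem]
      simp
end Maj

section Maj2

variable {n k : ℕ}

lemma acond_pointwise (hkn : k ≤ n) {g : Fin k → Fin (n - k + 1)} (hg : Monotone g)
    (σ : Equiv.Perm (Fin k)) (a : Fin k) :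
    (if Acond hkn g σ a then (pmap hkn g a : ℕ) + 1 else 0)
      = (if h : (a : ℕ) + 1 < k then
          (if dpat σ (a : ℕ) then (g a : ℕ)
           else if (g a : ℕ) < (g ⟨(a : ℕ) + 1, h⟩ : ℕ) then (g a : ℕ) + ((a : ℕ) + 1 + 0) else 0)
         else (if (g a : ℕ) < n - k then (g a : ℕ) + (k + 0) else 0))
        + (if (∃ h : (a : ℕ) + 1 < k, σ ⟨(a : ℕ) + 1, h⟩ < σ ⟨(a : ℕ), Nat.lt_of_succ_lt h⟩)
            then (a : ℕ) + 1 else 0) := by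
  have hpa : (pmap hkn g a : ℕ) = (g a : ℕ) + (a : ℕ) := rfl
  by_cases h : (a : ℕ) + 1 < k
  · have hae : (⟨(a : ℕ), Nat.lt_of_succ_lt h⟩ : Fin k) = a := Fin.ext rfl
    have hdp : dpat σ (a : ℕ)
        = decide (σ ⟨(a : ℕ) + 1, h⟩ < σ ⟨(a : ℕ), Nat.lt_of_succ_lt h⟩) := by
      rw [dpat]; rw [dif_pos h]
    have hAc : Acond hkn g σ a
        ↔ ((pmap hkn g ⟨(a : ℕ) + 1, h⟩ : ℕ) = (pmap hkn g a : ℕ) + 1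
            → σ ⟨(a : ℕ) + 1, h⟩ < σ a) := by
      rw [Acond, dif_pos h]
    have hpa1 : (pmap hkn g ⟨(a : ℕ) + 1, h⟩ : ℕ) = (g ⟨(a : ℕ) + 1, h⟩ : ℕ) + ((a : ℕ) + 1) :=
      rfl
    rw [dif_pos h]
    by_cases hd : σ ⟨(a : ℕ) + 1, h⟩ < σ ⟨(a : ℕ), Nat.lt_of_succ_lt h⟩
    · have hA : Acond hkn g σ a := hAc.2 (fun _ => by rwa [hae] at hd)
      have hdpt : dpat σ (a : ℕ) = true := by rw [hdp]; exact decide_eq_true hd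
      have hE : ∃ h' : (a : ℕ) + 1 < k,
          σ ⟨(a : ℕ) + 1, h'⟩ < σ ⟨(a : ℕ), Nat.lt_of_succ_lt h'⟩ := ⟨h, hd⟩
      rw [if_pos hA, if_pos hdpt, if_pos hE, hpa]
      omega
    · have hdpf : ¬ (dpat σ (a : ℕ) = true) := by
        rw [hdp]; simpa using hd
      have hE : ¬ ∃ h' : (a : ℕ) + 1 < k,
          σ ⟨(a : ℕ) + 1, h'⟩ < σ ⟨(a : ℕ), Nat.lt_of_succ_lt h'⟩ := by
        rintro ⟨h', hd'⟩; exact hd hd'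
      by_cases hlt : (g a : ℕ) < (g ⟨(a : ℕ) + 1, h⟩ : ℕ)
      · have hA : Acond hkn g σ a := hAc.2 (fun heq => by
          rw [hpa1, hpa] at heq; omega)
        rw [if_pos hA, if_neg hdpf, if_pos hlt, if_neg hE, hpa]
        omega
      · have hgle : (g a : ℕ) ≤ (g ⟨(a : ℕ) + 1, h⟩ : ℕ) := by
          apply hg; rw [Fin.le_def]; simp
        have hdna : ¬ σ ⟨(a : ℕ) + 1, h⟩ < σ a := by rwa [hae] at hd
        have hA : ¬ Acond hkn g σ a := fun hA =>
          hdna (hAc.1 hA (by rw [hpa1, hpa]; omega))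
        rw [if_neg hA, if_neg hdpf, if_neg hlt, if_neg hE]
  · have hA : Acond hkn g σ a ↔ (pmap hkn g a : ℕ) + 1 < n := by
      rw [Acond, dif_neg h]
    have hE : ¬ ∃ h' : (a : ℕ) + 1 < k,
        σ ⟨(a : ℕ) + 1, h'⟩ < σ ⟨(a : ℕ), Nat.lt_of_succ_lt h'⟩ := by
      rintro ⟨h', _⟩; exact h h'
    have hak : (a : ℕ) + 1 = k := by have := a.isLt; omega
    rw [dif_neg h]
    by_cases hc : (g a : ℕ) < n - k
    · have hApos : Acond hkn g σ a := hA.2 (by rw [hpa]; omega)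
      rw [if_pos hApos, if_pos hc, if_neg hE, hpa]
      omega
    · have hAn : ¬ Acond hkn g σ a := fun hx => by
        have := hA.1 hx; rw [hpa] at this; exact hc (by omega)
      rw [if_neg hAn, if_neg hc, if_neg hE]

lemma enc_dMaj (hkn : k ≤ n) {g : Fin k → Fin (n - k + 1)} (hg : Monotone g)
    (σ : Equiv.Perm (Fin k)) :
    dMaj (enc hkn g σ) = tstat k 0 (n - k) (dpat σ) g + majNum σ := by
  rw [dMaj, descent_set_eq hkn hg σ, Finset.sum_image (by
    intro x _ y _ hxy
    exact (pmap_strictMono hkn hg).injective (Fin.ext hxy)),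
    Finset.sum_filter]
  have hR : majNum σ = ∑ a : Fin k,
      (if (∃ h : (a : ℕ) + 1 < k, σ ⟨(a : ℕ) + 1, h⟩ < σ ⟨(a : ℕ), Nat.lt_of_succ_lt h⟩)
        then (a : ℕ) + 1 else 0) := by
    rw [majNum, Finset.sum_filter,
      ← Fin.sum_univ_eq_sum_range (fun i => if (∃ h : i + 1 < k,
          σ ⟨i + 1, h⟩ < σ ⟨i, Nat.lt_of_succ_lt h⟩) then i + 1 else 0) k]
  rw [hR, tstat, ← Finset.sum_add_distrib]
  exact Finset.sum_congr rfl (fun a _ => acond_pointwise hkn hg σ a)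

end Maj2

lemma no_descent_le {k : ℕ} (σ : Equiv.Perm (Fin k)) (i : Fin k)
    (hnd : ∀ a b : Fin k, (i : ℕ) ≤ (a : ℕ) → (b : ℕ) = (a : ℕ) + 1 → (σ a : ℕ) < (σ b : ℕ)) :
    (σ i : ℕ) ≤ (i : ℕ) := by
  have H : ∀ t (hti : (i : ℕ) + t < k), (σ i : ℕ) + t ≤ (σ ⟨(i : ℕ) + t, hti⟩ : ℕ) := by
    intro t
    induction t with
    | zero =>
      intro hti
      have he : (⟨(i : ℕ) + 0, hti⟩ : Fin k) = i := Fin.ext (by simp)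
      rw [he]
      omega
    | succ t ih =>
      intro hti
      have hprev : (i : ℕ) + t < k := by omega
      have h1 := ih hprev
      have h2 := hnd ⟨(i : ℕ) + t, hprev⟩ ⟨(i : ℕ) + (t + 1), hti⟩ (by simp) rfl
      omega
  have hk : (i : ℕ) < k := i.isLt
  have := H (k - 1 - (i : ℕ)) (by omega)
  have hb := (σ ⟨(i : ℕ) + (k - 1 - (i : ℕ)), by omega⟩).isLt
  omega

lemma exc_le_maj {k : ℕ} (σ : Equiv.Perm (Fin k)) : excNum σ ≤ majNum σ := by
  classical
  set D := (Finset.range k).filter (fun i =>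
      ∃ h : i + 1 < k, σ ⟨i + 1, h⟩ < σ ⟨i, Nat.lt_of_succ_lt h⟩) with hD
  have hmaj : majNum σ = ∑ i ∈ D, (i + 1) := rfl
  have hstep : ∀ (a b : Fin k), ((a : ℕ) ∉ D) → (b : ℕ) = (a : ℕ) + 1 → (σ a : ℕ) < (σ b : ℕ) := by
    intro a b ha hb
    have h' : (a : ℕ) + 1 < k := hb ▸ b.isLt
    have hnd : ¬ σ ⟨(a : ℕ) + 1, h'⟩ < σ ⟨(a : ℕ), Nat.lt_of_succ_lt h'⟩ := by
      intro hdes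
      exact ha (Finset.mem_filter.2 ⟨Finset.mem_range.2 (Nat.lt_of_succ_lt h'), ⟨h', hdes⟩⟩)
    have hea : (⟨(a : ℕ), Nat.lt_of_succ_lt h'⟩ : Fin k) = a := Fin.ext rfl
    have heb : (⟨(a : ℕ) + 1, h'⟩ : Fin k) = b := Fin.ext hb.symm
    rw [hea, heb] at hnd
    have hle : σ a ≤ σ b := not_lt.1 hnd
    have hne : σ a ≠ σ b := fun h => by
      have : a = b := σ.injective h
      rw [this] at hb; omega
    rw [Fin.le_def] at hle
    rcases Nat.lt_or_ge (σ a : ℕ) (σ b : ℕ) with h | h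
    · exact h
    · exfalso; exact hne (Fin.ext (by omega))
  by_cases hne : D.Nonempty
  · set M := D.max' hne with hM
    have hMD : M ∈ D := D.max'_mem hne
    have hmaj_ge : M + 1 ≤ majNum σ := by
      rw [hmaj]
      exact Finset.single_le_sum (f := fun i => i + 1) (fun i _ => Nat.zero_le _) hMD
    have hexc_le : excNum σ ≤ M + 1 := by
      rw [excNum]
      calc (Finset.univ.filter (fun i : Fin k => (i : ℕ) < (σ i : ℕ))).card
          ≤ (Finset.range (M + 1)).card := by
            refine Finset.card_le_card_of_injOn (fun i : Fin k => (i : ℕ)) ?_ ?_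
            · intro i hi
              rw [Finset.mem_coe, Finset.mem_filter] at hi
              show (i : ℕ) ∈ Finset.range (M + 1)
              rw [Finset.mem_range]
              by_contra hgt
              have hiM : M < (i : ℕ) := by omega
              have : (σ i : ℕ) ≤ (i : ℕ) := by
                apply no_descent_le σ i
                intro a b hia hb
                apply hstep a b _ hb
                intro haD
                have : (a : ℕ) ≤ M := Finset.le_max' D _ haD
                omega
              omega
            · intro x _ y _ hxy
              exact Fin.ext hxy
        _ = M + 1 := by rw [Finset.card_range]
    omega
  · rw [Finset.not_nonempty_iff_eq_empty] at hne
    have : excNum σ = 0 := by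
      rw [excNum, Finset.card_eq_zero, Finset.filter_eq_empty_iff]
      intro i _
      have : (σ i : ℕ) ≤ (i : ℕ) := by
        apply no_descent_le σ i
        intro a b hia hb
        apply hstep a b _ hb
        rw [hne]
        exact Finset.notMem_empty _
      omega
    omega

section Bij

variable {n k : ℕ}

lemma enc_injective (hkn : k ≤ n) {g g' : Fin k → Fin (n - k + 1)}
    (hg : Monotone g) (hg' : Monotone g') (σ σ' : Equiv.Perm (Fin k))
    (h : enc hkn g σ = enc hkn g' σ') : g = g' ∧ σ = σ' := by
  have hsupp : Finset.image (pmap hkn g) Finset.univ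
      = Finset.image (pmap hkn g') Finset.univ := by
    rw [← enc_supp hkn hg σ, ← enc_supp hkn hg' σ', h]
  have hcard : (Finset.image (pmap hkn g) Finset.univ).card = k := by
    rw [Finset.card_image_of_injective _ (pmap_strictMono hkn hg).injective,
      Finset.card_univ, Fintype.card_fin]
  have h1 : pmap hkn g = ⇑((Finset.image (pmap hkn g) Finset.univ).orderEmbOfFin hcard) :=
    Finset.orderEmbOfFin_unique hcard
      (fun x => Finset.mem_image_of_mem _ (Finset.mem_univ x)) (pmap_strictMono hkn hg)
  have h2 : pmap hkn g' = ⇑((Finset.image (pmap hkn g) Finset.univ).orderEmbOfFin hcard) :=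
    Finset.orderEmbOfFin_unique hcard
      (fun x => by rw [hsupp]; exact Finset.mem_image_of_mem _ (Finset.mem_univ x))
      (pmap_strictMono hkn hg')
  have hp : pmap hkn g = pmap hkn g' := by rw [h1, h2]
  have hgg : g = g' := by
    funext a
    have := congrFun hp a
    have hv : (g a : ℕ) + (a : ℕ) = (g' a : ℕ) + (a : ℕ) := by
      rw [← pmap_val hkn g a, ← pmap_val hkn g' a, this]
    exact Fin.ext (by omega)
  refine ⟨hgg, ?_⟩
  subst hgg
  apply Equiv.ext
  intro a
  have := congrFun h (pmap hkn g a)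
  rw [enc_apply hkn hg σ a, enc_apply hkn hg σ' a] at this
  exact (pmap_strictMono hkn hg).injective (Fin.succ_injective _ this)

lemma strictMono_grow {N : ℕ} (f : Fin k → Fin N) (hf : StrictMono f) :
    ∀ (t : ℕ) (a b : Fin k), (b : ℕ) = (a : ℕ) + t → (f a : ℕ) + t ≤ (f b : ℕ) := by
  intro t
  induction t with
  | zero =>
    intro a b hb
    have : b = a := Fin.ext (by omega)
    rw [this]
    omega
  | succ t ih =>
    intro a b hb
    have hb' : (a : ℕ) + t < k := by have := b.isLt; omega
    have h1 := ih a ⟨(a : ℕ) + t, hb'⟩ rfl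
    have h2 : f ⟨(a : ℕ) + t, hb'⟩ < f b := by
      apply hf
      rw [Fin.lt_def]
      simp [hb]
    rw [Fin.lt_def] at h2
    simp at h1 h2
    omega

lemma enc_surjective (hk1 : 1 ≤ k) (hkn : k ≤ n) (w : Fin n → Fin (n + 1))
    (hd : IsDecorated w)
    (hsc : (Finset.univ.filter (fun i : Fin n => (w i : ℕ) ≠ 0)).card = k) :
    ∃ (g : Fin k → Fin (n - k + 1)) (σ : Equiv.Perm (Fin k)),
      Monotone g ∧ enc hkn g σ = w := by
  classical
  set S := Finset.univ.filter (fun i : Fin n => (w i : ℕ) ≠ 0) with hSdef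
  set e := S.orderEmbOfFin hsc with hedef
  have hem : ∀ a : Fin k, e a ∈ S := fun a => S.orderEmbOfFin_mem hsc a
  have hw : ∀ a : Fin k, (w (e a) : ℕ) ≠ 0 := fun a => (Finset.mem_filter.1 (hem a)).2
  have hsm : StrictMono ⇑e := (S.orderEmbOfFin hsc).strictMono
  have hge : ∀ a : Fin k, (a : ℕ) ≤ (e a : ℕ) := by
    intro a
    have h0 : (0 : ℕ) < k := by omega
    have := strictMono_grow (⇑e) hsm (a : ℕ) ⟨0, h0⟩ a (by simp)
    omega
  have hub : ∀ a : Fin k, (e a : ℕ) + (k - 1 - (a : ℕ)) ≤ n - 1 := by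
    intro a
    have hak : (a : ℕ) < k := a.isLt
    have := strictMono_grow (⇑e) hsm (k - 1 - (a : ℕ)) a ⟨k - 1, by omega⟩ (by simp; omega)
    have := (e ⟨k - 1, by omega⟩).isLt
    omega
  have hbound : ∀ a : Fin k, (e a : ℕ) - (a : ℕ) < n - k + 1 := by
    intro a
    have h1 := hub a
    have := a.isLt
    omega
  set g : Fin k → Fin (n - k + 1) := fun a => ⟨(e a : ℕ) - (a : ℕ), hbound a⟩ with hgdef
  have hg : Monotone g := by
    intro a b hab
    rw [Fin.le_def] at hab
    have := strictMono_grow (⇑e) hsm ((b : ℕ) - (a : ℕ)) a b (by omega)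
    rw [Fin.le_def]
    show (e a : ℕ) - (a : ℕ) ≤ (e b : ℕ) - (b : ℕ)
    have := hge a
    omega
  have hpe : pmap hkn g = ⇑e := by
    funext a
    apply Fin.ext
    rw [pmap_val]
    show (e a : ℕ) - (a : ℕ) + (a : ℕ) = (e a : ℕ)
    have := hge a
    omega
  have hex : ∀ a : Fin k, ∃ b : Fin k, (w (e a) : ℕ) = (e b : ℕ) + 1 := by
    intro a
    obtain ⟨j, hj0, hjv⟩ := hd.2 (e a) (hw a)
    have hjS : j ∈ S := Finset.mem_filter.2 ⟨Finset.mem_univ j, hj0⟩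
    have hjr : j ∈ Set.range ⇑e := by
      rw [hedef, Finset.range_orderEmbOfFin]
      exact hjS
    obtain ⟨b, hb⟩ := hjr
    exact ⟨b, by rw [hjv, hb]⟩
  choose f hf using hex
  have hfinj : Function.Injective f := by
    intro a a' hfa
    have hv : (w (e a) : ℕ) = (w (e a') : ℕ) := by rw [hf a, hf a', hfa]
    have hEq : w (e a) = w (e a') := Fin.ext hv
    have := hd.1 (e a) (e a') (hw a) hEq
    exact hsm.injective this
  set σ : Equiv.Perm (Fin k) := Equiv.ofBijective f (Finite.injective_iff_bijective.1 hfinj)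
    with hσdef
  have hσa : ∀ a, σ a = f a := fun a => rfl
  refine ⟨g, σ, hg, ?_⟩
  funext i
  by_cases hmem : ∃ a, pmap hkn g a = i
  · obtain ⟨a, rfl⟩ := hmem
    rw [enc_apply hkn hg σ a]
    apply Fin.ext
    rw [Fin.val_succ, hσa a]
    have h1 : (pmap hkn g (f a) : ℕ) = (e (f a) : ℕ) := by rw [hpe]
    have h2 : pmap hkn g a = e a := by rw [hpe]
    rw [h1, h2, ← hf a]
  · rw [enc_apply' hkn g σ i hmem]
    have hiS : i ∉ S := by
      intro hiS
      have : (i : Fin n) ∈ Set.range ⇑e := by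
        rw [hedef, Finset.range_orderEmbOfFin]
        exact hiS
      obtain ⟨a, ha⟩ := this
      exact hmem ⟨a, by rw [hpe]; exact ha⟩
    have : ¬ (w i : ℕ) ≠ 0 := fun hne => hiS (Finset.mem_filter.2 ⟨Finset.mem_univ i, hne⟩)
    apply Fin.ext
    have h0 : (w i : ℕ) = 0 := by omega
    simp [h0]

end Bij

lemma key0 (m k : ℕ) (hk : 1 ≤ k) (d : ℕ → Bool) :
    ∑ g ∈ monoSet k m, (RatFunc.X : RatFunc ℚ) ^ tstat k 0 m d g = qBinom (m + k) k := by
  cases k with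
  | zero => omega
  | succ k' =>
    have h := key m k' 0 d
    simp only [add_zero] at h
    rw [← h]
    apply Finset.sum_congr rfl
    intro g _
    rw [qBinom_zero, one_mul]

lemma mem_pairs {n k : ℕ} (p : (Fin k → Fin (n - k + 1)) × Equiv.Perm (Fin k))
    (hp : p ∈ (monoSet k (n - k)) ×ˢ (Finset.univ : Finset (Equiv.Perm (Fin k)))) :
    Monotone p.1 := by
  rw [Finset.mem_product, monoSet, Finset.mem_filter] at hp
  exact hp.1.2

lemma sum_over_k (n k : ℕ) (hk1 : 1 ≤ k) (hkn : k ≤ n) :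
    ∑ w ∈ Finset.univ.filter (fun w : Fin n → Fin (n + 1) =>
        IsDecorated w ∧ ¬ isTheta w ∧
          (Finset.univ.filter (fun i : Fin n => (w i : ℕ) ≠ 0)).card = k),
      Polynomial.C ((RatFunc.X : RatFunc ℚ) ^ dMajSubExc w) * Polynomial.X ^ dExcP1 w
      = Polynomial.C (qBinom n k) * qEulerian k * Polynomial.X := by
  classical
  have hbij : ∑ p ∈ (monoSet k (n - k)) ×ˢ (Finset.univ : Finset (Equiv.Perm (Fin k))),
          Polynomial.C ((RatFunc.X : RatFunc ℚ) ^
              (tstat k 0 (n - k) (dpat p.2) p.1 + (majNum p.2 - excNum p.2))) *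
            Polynomial.X ^ (excNum p.2 + 1)
      = ∑ w ∈ Finset.univ.filter (fun w : Fin n → Fin (n + 1) =>
          IsDecorated w ∧ ¬ isTheta w ∧
            (Finset.univ.filter (fun i : Fin n => (w i : ℕ) ≠ 0)).card = k),
        Polynomial.C ((RatFunc.X : RatFunc ℚ) ^ dMajSubExc w) * Polynomial.X ^ dExcP1 w := by
    apply Finset.sum_bij (fun p _ => enc hkn p.1 p.2)
    · intro p hp
      have hg := mem_pairs p hp
      rw [Finset.mem_filter]
      exact ⟨Finset.mem_univ _, enc_decorated hkn hg p.2, enc_not_theta hk1 hkn hg p.2,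
        enc_supp_card hkn hg p.2⟩
    · intro p hp q hq heq
      have hgp := mem_pairs p hp
      have hgq := mem_pairs q hq
      obtain ⟨h1, h2⟩ := enc_injective hkn hgp hgq p.2 q.2 heq
      exact Prod.ext h1 h2
    · intro w hw
      rw [Finset.mem_filter] at hw
      obtain ⟨-, hdec, hnt, hcard⟩ := hw
      obtain ⟨g, σ, hg, henc⟩ := enc_surjective hk1 hkn w hdec hcard
      refine ⟨(g, σ), ?_, henc⟩
      rw [Finset.mem_product, monoSet, Finset.mem_filter]
      exact ⟨⟨Finset.mem_univ _, hg⟩, Finset.mem_univ _⟩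
    · intro p hp
      have hg := mem_pairs p hp
      have hnt := enc_not_theta hk1 hkn hg p.2
      have hmaj := enc_dMaj hkn hg p.2
      have hexc := enc_dExc hkn hg p.2
      have hle := exc_le_maj p.2
      have h1 : dMajSubExc (enc hkn p.1 p.2)
          = tstat k 0 (n - k) (dpat p.2) p.1 + (majNum p.2 - excNum p.2) := by
        rw [dMajSubExc, if_neg hnt, hmaj, hexc]
        omega
      have h2 : dExcP1 (enc hkn p.1 p.2) = excNum p.2 + 1 := by
        rw [dExcP1, if_neg hnt, hexc]
      rw [h1, h2]
  rw [← hbij, Finset.sum_product_right]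
  have hper : ∀ σ : Equiv.Perm (Fin k),
      ∑ g ∈ monoSet k (n - k),
          Polynomial.C ((RatFunc.X : RatFunc ℚ) ^
              (tstat k 0 (n - k) (dpat σ) g + (majNum σ - excNum σ))) *
            Polynomial.X ^ (excNum σ + 1)
        = Polynomial.C (qBinom n k) *
            (Polynomial.C ((RatFunc.X : RatFunc ℚ) ^ (majNum σ - excNum σ)) *
              Polynomial.X ^ excNum σ) * Polynomial.X := by
    intro σ
    have hsum : ∑ g ∈ monoSet k (n - k),
        Polynomial.C ((RatFunc.X : RatFunc ℚ) ^
            (tstat k 0 (n - k) (dpat σ) g + (majNum σ - excNum σ))) *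
          Polynomial.X ^ (excNum σ + 1)
        = (∑ g ∈ monoSet k (n - k),
            Polynomial.C ((RatFunc.X : RatFunc ℚ) ^ tstat k 0 (n - k) (dpat σ) g)) *
          (Polynomial.C ((RatFunc.X : RatFunc ℚ) ^ (majNum σ - excNum σ)) *
            Polynomial.X ^ (excNum σ + 1)) := by
      rw [Finset.sum_mul]
      apply Finset.sum_congr rfl
      intro g _
      rw [pow_add, map_mul]
      ring
    rw [hsum]
    have hkey : ∑ g ∈ monoSet k (n - k),
        Polynomial.C ((RatFunc.X : RatFunc ℚ) ^ tstat k 0 (n - k) (dpat σ) g)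
        = Polynomial.C (qBinom n k) := by
      rw [← map_sum, key0 (n - k) k hk1 (dpat σ),
        show n - k + k = n from by omega]
    rw [hkey, pow_succ]
    ring
  rw [Finset.sum_congr rfl (fun σ _ => hper σ), ← Finset.sum_mul, ← Finset.mul_sum, qEulerian]

lemma istheta_iff {n : ℕ} (w : Fin n → Fin (n + 1)) :
    isTheta w ↔ w = (fun _ => (0 : Fin (n + 1))) := by
  constructor
  · intro h
    funext i
    exact Fin.ext (by simpa using h i)
  · intro h i
    rw [h]
    simp

/-- The `q`-binomial Eulerian polynomial
`Ã_n(q,t) = 1 + t·Σ_{k=1}^n [n choose k]_q · A_k(q,t)` equals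
`Σ_{σ ∈ S̃_n} q^{maj(σ)-exc(σ)} t^{exc(σ)+1}`, the sum over decorated
permutations of `[n]`. -/
theorem qbinomial_eulerian_decorated (n : ℕ) :
    (1 : Polynomial (RatFunc ℚ)) + Polynomial.X *
        ∑ k ∈ Finset.Icc 1 n, Polynomial.C (qBinom n k) * qEulerian k
      = ∑ w ∈ Finset.univ.filter (fun w : Fin n → Fin (n + 1) => IsDecorated w),
          Polynomial.C ((RatFunc.X : RatFunc ℚ) ^ dMajSubExc w) *
            Polynomial.X ^ dExcP1 w := by
  classical
  have hθdec : IsDecorated (fun _ : Fin n => (0 : Fin (n + 1))) := by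
    constructor
    · intro i j hi _
      simp at hi
    · intro i hi
      simp at hi
  have hθmem : (fun _ : Fin n => (0 : Fin (n + 1)))
      ∈ Finset.univ.filter (fun w : Fin n → Fin (n + 1) => IsDecorated w) :=
    Finset.mem_filter.2 ⟨Finset.mem_univ _, hθdec⟩
  have hθth : isTheta (fun _ : Fin n => (0 : Fin (n + 1))) := fun i => rfl
  have hθval : Polynomial.C ((RatFunc.X : RatFunc ℚ)
        ^ dMajSubExc (fun _ : Fin n => (0 : Fin (n + 1)))) *
      Polynomial.X ^ dExcP1 (fun _ : Fin n => (0 : Fin (n + 1))) = 1 := by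
    rw [dMajSubExc, if_pos hθth, dExcP1, if_pos hθth]
    simp
  have hsplit : (∑ w ∈ Finset.univ.filter (fun w : Fin n → Fin (n + 1) => IsDecorated w),
        Polynomial.C ((RatFunc.X : RatFunc ℚ) ^ dMajSubExc w) * Polynomial.X ^ dExcP1 w)
      = Polynomial.C ((RatFunc.X : RatFunc ℚ)
            ^ dMajSubExc (fun _ : Fin n => (0 : Fin (n + 1)))) *
          Polynomial.X ^ dExcP1 (fun _ : Fin n => (0 : Fin (n + 1)))
        + ∑ w ∈ (Finset.univ.filter
              (fun w : Fin n → Fin (n + 1) => IsDecorated w)).erase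
                (fun _ => (0 : Fin (n + 1))),
            Polynomial.C ((RatFunc.X : RatFunc ℚ) ^ dMajSubExc w) *
              Polynomial.X ^ dExcP1 w :=
    (Finset.add_sum_erase _ _ hθmem).symm
  rw [hsplit, hθval]
  congr 1
  set s := (Finset.univ.filter (fun w : Fin n → Fin (n + 1) => IsDecorated w)).erase
      (fun _ => (0 : Fin (n + 1))) with hs
  have hmem_s : ∀ w : Fin n → Fin (n + 1),
      w ∈ s ↔ (IsDecorated w ∧ ¬ isTheta w) := by
    intro w
    rw [hs, Finset.mem_erase, Finset.mem_filter, istheta_iff]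
    constructor
    · rintro ⟨h1, _, h2⟩; exact ⟨h2, h1⟩
    · rintro ⟨h1, h2⟩; exact ⟨h2, Finset.mem_univ _, h1⟩
  have hmap : ∀ w ∈ s,
      (Finset.univ.filter (fun i : Fin n => (w i : ℕ) ≠ 0)).card ∈ Finset.Icc 1 n := by
    intro w hw
    rw [hmem_s] at hw
    rw [Finset.mem_Icc]
    constructor
    · by_contra hlt
      have h0 : (Finset.univ.filter (fun i : Fin n => (w i : ℕ) ≠ 0)).card = 0 := by omega
      rw [Finset.card_eq_zero, Finset.filter_eq_empty_iff] at h0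
      apply hw.2
      intro i
      have := h0 (Finset.mem_univ i)
      omega
    · calc (Finset.univ.filter (fun i : Fin n => (w i : ℕ) ≠ 0)).card
          ≤ (Finset.univ : Finset (Fin n)).card := Finset.card_filter_le _ _
        _ = n := by rw [Finset.card_univ, Fintype.card_fin]
  have hfib : (∑ w ∈ s, Polynomial.C ((RatFunc.X : RatFunc ℚ) ^ dMajSubExc w) *
        Polynomial.X ^ dExcP1 w)
      = ∑ k ∈ Finset.Icc 1 n, ∑ w ∈ s.filter (fun w =>
            (Finset.univ.filter (fun i : Fin n => (w i : ℕ) ≠ 0)).card = k),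
          Polynomial.C ((RatFunc.X : RatFunc ℚ) ^ dMajSubExc w) *
            Polynomial.X ^ dExcP1 w :=
    (Finset.sum_fiberwise_of_maps_to hmap _).symm
  have hinner : ∀ k ∈ Finset.Icc 1 n,
      (∑ w ∈ s.filter (fun w =>
            (Finset.univ.filter (fun i : Fin n => (w i : ℕ) ≠ 0)).card = k),
          Polynomial.C ((RatFunc.X : RatFunc ℚ) ^ dMajSubExc w) *
            Polynomial.X ^ dExcP1 w)
        = Polynomial.C (qBinom n k) * qEulerian k * Polynomial.X := by
    intro k hk
    rw [Finset.mem_Icc] at hk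
    have hseteq : s.filter (fun w =>
          (Finset.univ.filter (fun i : Fin n => (w i : ℕ) ≠ 0)).card = k)
        = Finset.univ.filter (fun w : Fin n → Fin (n + 1) =>
            IsDecorated w ∧ ¬ isTheta w ∧
              (Finset.univ.filter (fun i : Fin n => (w i : ℕ) ≠ 0)).card = k) := by
      ext w
      rw [Finset.mem_filter, hmem_s, Finset.mem_filter]
      constructor
      · rintro ⟨⟨h1, h2⟩, h3⟩; exact ⟨Finset.mem_univ _, h1, h2, h3⟩
      · rintro ⟨-, h1, h2, h3⟩; exact ⟨⟨h1, h2⟩, h3⟩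
    rw [hseteq]
    exact sum_over_k n k hk.1 hk.2
  rw [hfib, Finset.sum_congr rfl hinner, mul_comm, Finset.sum_mul]
end

section
/- For every n ≥ 0, Σ_{(α,f) ∈ extended codes of length n} t^{ind(α,f)+1} = 1 + t·Σ_{k=1}^n C(n,k)·Σ_{(β,g) ∈ Code_k} t^{ind(β,g)}; i.e., extended codes of length n graded by index+1 are enumerated by the binomial Eulerian polynomial built from Stembridge-code enumerators. -/
open scoped Classical

/-- The maximum finite value appearing in a sequence over `ℕ ∪ {∞}`
(`∞` contributes `0`). -/
def extMax {n : ℕ} (α : Fin n → ℕ∞) : ℕ := Finset.univ.sup fun i => (α i).toNat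

/-- `(α, f)` is an extended code of length `n`: `α` is a sequence over
`ℕ ∪ {∞}`, each `k` with `1 ≤ k ≤ m` (`m` the maximum finite value) occurs at
least twice, and `1 ≤ f k ≤ (occurrences of k) - 1`; `f` vanishes outside
`[m]`.  Positions equal to `∞` are unrestricted. -/
def IsExtCode (n : ℕ) (α : Fin n → ℕ∞) (f : ℕ → ℕ) : Prop :=
  (∀ k, 1 ≤ k → k ≤ extMax α →
      1 ≤ f k ∧ f k + 1 ≤ (Finset.univ.filter (fun i => α i = (k : ℕ∞))).card) ∧
  (∀ k, k = 0 ∨ extMax α < k → f k = 0)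

/-- `ind(α,f) + 1`, where the index of an extended code is the sum of its
marks, and the index of the all-`∞` code is `-1`. -/
noncomputable def extIndP1 {n : ℕ} (α : Fin n → ℕ∞) (f : ℕ → ℕ) : ℕ :=
  if ∀ i, α i = ⊤ then 0 else (∑ k ∈ Finset.Icc 1 (extMax α), f k) + 1

/-- The maximum value appearing in the sequence `α`. -/
def codeMax {k : ℕ} (α : Fin k → ℕ) : ℕ := Finset.univ.sup α

/-- `(α, f)` is a Stembridge code of length `k`. -/
def IsStembridgeCode (k : ℕ) (α : Fin k → ℕ) (f : ℕ → ℕ) : Prop :=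
  (∀ j, 1 ≤ j → j ≤ codeMax α →
      1 ≤ f j ∧ f j + 1 ≤ (Finset.univ.filter (fun i => α i = j)).card) ∧
  (∀ j, j = 0 ∨ codeMax α < j → f j = 0)

/-- The index of a Stembridge code. -/
def codeIndex {k : ℕ} (α : Fin k → ℕ) (f : ℕ → ℕ) : ℕ :=
  ∑ j ∈ Finset.Icc 1 (codeMax α), f j

/-! ### Auxiliary lemmas -/

lemma aux_sum_le {n j : ℕ} {α : Fin n → ℕ∞} {f : ℕ → ℕ}
    (hind : extIndP1 α f = j) :
    (∑ k ∈ Finset.Icc 1 (extMax α), f k) ≤ j := by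
  by_cases htop : ∀ i, α i = ⊤
  · rw [extIndP1, if_pos htop] at hind
    have hm : extMax α = 0 := by simp [extMax, htop]
    simp [hm]
  · rw [extIndP1, if_neg htop] at hind
    omega

lemma aux_extMax_le {n j : ℕ} {α : Fin n → ℕ∞} {f : ℕ → ℕ}
    (h : IsExtCode n α f) (hind : extIndP1 α f = j) : extMax α ≤ j := by
  have h1 : extMax α ≤ ∑ k ∈ Finset.Icc 1 (extMax α), f k := by
    calc extMax α = ∑ k ∈ Finset.Icc 1 (extMax α), 1 := by simp
    _ ≤ ∑ k ∈ Finset.Icc 1 (extMax α), f k := by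
        apply Finset.sum_le_sum
        intro k hk
        rw [Finset.mem_Icc] at hk
        exact (h.1 k hk.1 hk.2).1
  exact h1.trans (aux_sum_le hind)

lemma aux_f_le {n j : ℕ} {α : Fin n → ℕ∞} {f : ℕ → ℕ}
    (h : IsExtCode n α f) (hind : extIndP1 α f = j) (t : ℕ) : f t ≤ j := by
  by_cases ht : t = 0 ∨ extMax α < t
  · simp [h.2 t ht]
  · push_neg at ht
    have : f t ≤ ∑ k ∈ Finset.Icc 1 (extMax α), f k :=
      Finset.single_le_sum (fun k _ => Nat.zero_le _)
        (Finset.mem_Icc.mpr ⟨by omega, by omega⟩)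
    exact this.trans (aux_sum_le hind)

lemma finite_ext (n j : ℕ) : Finite {p : (Fin n → ℕ∞) × (ℕ → ℕ) //
    IsExtCode n p.1 p.2 ∧ extIndP1 p.1 p.2 = j} := by
  have hb : ∀ (p : {p : (Fin n → ℕ∞) × (ℕ → ℕ) //
      IsExtCode n p.1 p.2 ∧ extIndP1 p.1 p.2 = j}) (i : Fin n),
      (p.1.1 i).toNat < j + 1 := by
    intro p i
    have : (p.1.1 i).toNat ≤ extMax p.1.1 :=
      Finset.le_sup (f := fun i => ((p : (Fin n → ℕ∞) × (ℕ → ℕ)).1 i).toNat) (Finset.mem_univ i)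
    have := aux_extMax_le p.2.1 p.2.2
    omega
  apply Finite.of_injective (β := (Fin n → Option (Fin (j+1))) × (Fin (j+1) → Fin (j+1)))
    (f := fun p =>
      (fun i => if h : p.1.1 i = ⊤ then none else some ⟨(p.1.1 i).toNat, hb p i⟩,
       fun t => ⟨p.1.2 t, Nat.lt_succ_of_le (aux_f_le p.2.1 p.2.2 t)⟩))
  intro p q hpq
  rw [Prod.mk.injEq] at hpq
  apply Subtype.ext
  have hα : p.1.1 = q.1.1 := by
    funext i
    have hi := congrFun hpq.1 i
    by_cases h1 : p.1.1 i = ⊤ <;> by_cases h2 : q.1.1 i = ⊤ <;>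
      simp [h1, h2] at hi ⊢
    · rw [← ENat.coe_toNat h1, ← ENat.coe_toNat h2, hi]
  have hf : p.1.2 = q.1.2 := by
    funext t
    by_cases ht : t < j + 1
    · have := congrFun hpq.2 ⟨t, ht⟩
      simpa using this
    · have hmp := aux_extMax_le p.2.1 p.2.2
      have hmq := aux_extMax_le q.2.1 q.2.2
      rw [p.2.1.2 t (Or.inr (by omega)), q.2.1.2 t (Or.inr (by omega))]
  exact Prod.ext hα hf

/-! ### Restriction and extension along a subset -/

def resMap {n : ℕ} (S : Finset (Fin n)) (α : Fin n → ℕ∞) : Fin S.card → ℕ :=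
  fun i => (α (S.orderIsoOfFin rfl i)).toNat

noncomputable def extMap {n : ℕ} (S : Finset (Fin n)) (β : Fin S.card → ℕ) : Fin n → ℕ∞ :=
  fun i => if h : i ∈ S then ((β ((S.orderIsoOfFin rfl).symm ⟨i, h⟩) : ℕ) : ℕ∞) else ⊤

def Supp {n : ℕ} (S : Finset (Fin n)) (α : Fin n → ℕ∞) : Prop := ∀ i, α i ≠ ⊤ ↔ i ∈ S

lemma supp_iff {n : ℕ} (S : Finset (Fin n)) (α : Fin n → ℕ∞) :
    Finset.univ.filter (fun i => α i ≠ ⊤) = S ↔ Supp S α := by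
  rw [Finset.ext_iff, Supp]
  simp

lemma supp_extMap {n : ℕ} (S : Finset (Fin n)) (β : Fin S.card → ℕ) :
    Supp S (extMap S β) := by
  intro i
  by_cases h : i ∈ S <;> simp [extMap, h]

lemma ext_res {n : ℕ} (S : Finset (Fin n)) {α : Fin n → ℕ∞} (hs : Supp S α) :
    extMap S (resMap S α) = α := by
  funext i
  by_cases h : i ∈ S
  · rw [extMap, dif_pos h]
    have he : (S.orderIsoOfFin rfl) ((S.orderIsoOfFin rfl).symm ⟨i, h⟩) = ⟨i, h⟩ :=
      OrderIso.apply_symm_apply _ _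
    rw [resMap, he]
    exact ENat.coe_toNat ((hs i).mpr h)
  · rw [extMap, dif_neg h]
    by_contra hne
    exact h ((hs i).mp (Ne.symm hne))

lemma res_ext {n : ℕ} (S : Finset (Fin n)) (β : Fin S.card → ℕ) :
    resMap S (extMap S β) = β := by
  funext i
  rw [resMap, extMap]
  have h : ((S.orderIsoOfFin rfl) i : Fin n) ∈ S := ((S.orderIsoOfFin rfl) i).2
  rw [dif_pos h]
  have : (⟨((S.orderIsoOfFin rfl) i : Fin n), h⟩ : {x // x ∈ S}) = (S.orderIsoOfFin rfl) i :=
    Subtype.coe_eta _ _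
  rw [this, OrderIso.symm_apply_apply, ENat.toNat_coe]

lemma extMax_res {n : ℕ} (S : Finset (Fin n)) {α : Fin n → ℕ∞} (hs : Supp S α) :
    extMax α = codeMax (resMap S α) := by
  apply le_antisymm
  · apply Finset.sup_le
    intro i _
    by_cases h : i ∈ S
    · have : resMap S α ((S.orderIsoOfFin rfl).symm ⟨i, h⟩) = (α i).toNat := by
        rw [resMap, OrderIso.apply_symm_apply]
      rw [← this]
      exact Finset.le_sup (Finset.mem_univ _)
    · have : α i = ⊤ := by
        by_contra hne
        exact h ((hs i).mp hne)
      simp [this]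
  · apply Finset.sup_le
    intro i _
    exact Finset.le_sup (f := fun i => (α i).toNat)
      (Finset.mem_univ ((S.orderIsoOfFin rfl) i : Fin n))

lemma card_res {n : ℕ} (S : Finset (Fin n)) {α : Fin n → ℕ∞} (hs : Supp S α) (t : ℕ) :
    (Finset.univ.filter (fun i => resMap S α i = t)).card =
    (Finset.univ.filter (fun i => α i = (t : ℕ∞))).card := by
  apply Finset.card_bij (fun i _ => ((S.orderIsoOfFin rfl) i : Fin n))
  · intro i hi
    rw [Finset.mem_filter] at hi ⊢
    refine ⟨Finset.mem_univ _, ?_⟩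
    have hmem : ((S.orderIsoOfFin rfl) i : Fin n) ∈ S := ((S.orderIsoOfFin rfl) i).2
    have hne : α ((S.orderIsoOfFin rfl) i : Fin n) ≠ ⊤ := (hs _).mpr hmem
    rw [← ENat.coe_toNat hne]
    have h2 := hi.2
    rw [resMap] at h2
    exact_mod_cast h2
  · intro i hi i' hi' hii
    exact (S.orderIsoOfFin rfl).injective (Subtype.coe_injective hii)
  · intro i hi
    rw [Finset.mem_filter] at hi
    have hne : α i ≠ ⊤ := by
      rw [hi.2]; exact ENat.coe_ne_top t
    have hmem : i ∈ S := (hs i).mp hne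
    refine ⟨(S.orderIsoOfFin rfl).symm ⟨i, hmem⟩, ?_, ?_⟩
    · rw [Finset.mem_filter]
      refine ⟨Finset.mem_univ _, ?_⟩
      rw [resMap, OrderIso.apply_symm_apply, hi.2, ENat.toNat_coe]
    · rw [OrderIso.apply_symm_apply]

lemma isCode_iff {n : ℕ} (S : Finset (Fin n)) {α : Fin n → ℕ∞} {f : ℕ → ℕ}
    (hs : Supp S α) :
    IsExtCode n α f ↔ IsStembridgeCode S.card (resMap S α) f := by
  constructor
  · intro h
    constructor
    · intro t h1 h2
      rw [← extMax_res S hs] at h2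
      rw [card_res S hs]
      exact h.1 t h1 h2
    · intro t ht
      apply h.2
      rw [extMax_res S hs]
      exact ht
  · intro h
    constructor
    · intro t h1 h2
      rw [extMax_res S hs] at h2
      rw [← card_res S hs]
      exact h.1 t h1 h2
    · intro t ht
      apply h.2
      rw [← extMax_res S hs]
      exact ht

lemma ind_eq {n : ℕ} (S : Finset (Fin n)) {α : Fin n → ℕ∞} (f : ℕ → ℕ)
    (hs : Supp S α) (hS : S.Nonempty) :
    extIndP1 α f = codeIndex (resMap S α) f + 1 := by
  obtain ⟨i, hi⟩ := hS
  have htop : ¬ ∀ i, α i = ⊤ := fun h => ((hs i).mpr hi) (h i)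
  rw [extIndP1, if_neg htop, codeIndex, ← extMax_res S hs]

/-- The fiber over a nonempty subset `S` is equivalent to the set of
Stembridge codes of length `S.card` with index `j - 1`. -/
noncomputable def fiberEquiv (n j : ℕ) (hj : j ≠ 0) (S : Finset (Fin n)) (hS : S.Nonempty) :
    {p : (Fin n → ℕ∞) × (ℕ → ℕ) // (IsExtCode n p.1 p.2 ∧ extIndP1 p.1 p.2 = j) ∧
        Finset.univ.filter (fun i => p.1 i ≠ ⊤) = S} ≃
    {p : (Fin S.card → ℕ) × (ℕ → ℕ) //
        IsStembridgeCode S.card p.1 p.2 ∧ codeIndex p.1 p.2 = j - 1} where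
  toFun p := ⟨(resMap S p.1.1, p.1.2), by
    have hs : Supp S p.1.1 := (supp_iff S p.1.1).mp p.2.2
    refine ⟨(isCode_iff S hs).mp p.2.1.1, ?_⟩
    have h1 := p.2.1.2
    rw [ind_eq S p.1.2 hs hS] at h1
    dsimp only
    omega⟩
  invFun q := ⟨(extMap S q.1.1, q.1.2), by
    have hs := supp_extMap S q.1.1
    refine ⟨⟨?_, ?_⟩, (supp_iff S _).mpr hs⟩
    · rw [isCode_iff S hs, res_ext]
      exact q.2.1
    · rw [ind_eq S q.1.2 hs hS, res_ext]
      have := q.2.2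
      omega⟩
  left_inv p := Subtype.ext (Prod.ext (ext_res S ((supp_iff S p.1.1).mp p.2.2)) rfl)
  right_inv q := Subtype.ext (Prod.ext (res_ext S q.1.1) rfl)

lemma natCard_sigma {ι : Type*} [Fintype ι] (σ : ι → Type*) [∀ i, Finite (σ i)] :
    Nat.card (Sigma σ) = ∑ i, Nat.card (σ i) := by
  letI : ∀ i, Fintype (σ i) := fun i => Fintype.ofFinite _
  simp [Nat.card_eq_fintype_card]

/-- Coefficientwise form of
`Σ_{(α,f) ∈ extended codes of length n} t^{ind+1}
  = 1 + t·Σ_{k=1}^n C(n,k)·Σ_{(β,g) ∈ Code_k} t^{ind(β,g)}`: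
for every `j`, the number of extended codes of length `n` with `ind + 1 = j`
is `1` if `j = 0` (the all-`∞` code) and otherwise equals
`Σ_{k=1}^n C(n,k)·|{(β,g) ∈ Code_k : ind(β,g) = j-1}|`. -/
theorem ext_codes_binomial_eulerian (n j : ℕ) :
    Nat.card {p : (Fin n → ℕ∞) × (ℕ → ℕ) //
        IsExtCode n p.1 p.2 ∧ extIndP1 p.1 p.2 = j} =
      if j = 0 then 1 else
        ∑ k ∈ Finset.Icc 1 n, n.choose k *
          Nat.card {p : (Fin k → ℕ) × (ℕ → ℕ) //
            IsStembridgeCode k p.1 p.2 ∧ codeIndex p.1 p.2 = j - 1} := by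
  by_cases hj : j = 0
  · subst hj
    rw [if_pos rfl]
    rw [Nat.card_eq_one_iff_unique]
    constructor
    · constructor
      intro a b
      have key : ∀ (c : {p : (Fin n → ℕ∞) × (ℕ → ℕ) //
          IsExtCode n p.1 p.2 ∧ extIndP1 p.1 p.2 = 0}),
          (∀ i, c.1.1 i = ⊤) ∧ c.1.2 = fun _ => 0 := by
        intro c
        have htop : ∀ i, c.1.1 i = ⊤ := by
          by_contra h
          have := c.2.2
          rw [extIndP1, if_neg h] at this
          omega
        refine ⟨htop, ?_⟩
        funext t
        have hm : extMax c.1.1 = 0 := by simp [extMax, htop]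
        apply c.2.1.2
        omega
      apply Subtype.ext
      have ha := key a
      have hb := key b
      apply Prod.ext
      · funext i; rw [ha.1 i, hb.1 i]
      · rw [ha.2, hb.2]
    · refine ⟨⟨(fun _ => ⊤, fun _ => 0), ⟨⟨?_, fun _ _ => rfl⟩, ?_⟩⟩⟩
      · intro k h1 h2
        dsimp only at h2
        have hm : extMax (fun _ : Fin n => (⊤ : ℕ∞)) = 0 := by simp [extMax]
        omega
      · rw [extIndP1, if_pos (fun _ => rfl)]
  · rw [if_neg hj]
    haveI : Finite {p : (Fin n → ℕ∞) × (ℕ → ℕ) //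
        IsExtCode n p.1 p.2 ∧ extIndP1 p.1 p.2 = j} := finite_ext n j
    rw [← Nat.card_congr (Equiv.sigmaFiberEquiv
      (fun (a : {p : (Fin n → ℕ∞) × (ℕ → ℕ) //
          IsExtCode n p.1 p.2 ∧ extIndP1 p.1 p.2 = j}) =>
        Finset.univ.filter (fun i => a.1.1 i ≠ ⊤)))]
    rw [natCard_sigma]
    have key : ∀ S : Finset (Fin n),
        Nat.card {a : {p : (Fin n → ℕ∞) × (ℕ → ℕ) //
            IsExtCode n p.1 p.2 ∧ extIndP1 p.1 p.2 = j} //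
            Finset.univ.filter (fun i => a.1.1 i ≠ ⊤) = S} =
        if S.Nonempty then Nat.card {p : (Fin S.card → ℕ) × (ℕ → ℕ) //
            IsStembridgeCode S.card p.1 p.2 ∧ codeIndex p.1 p.2 = j - 1} else 0 := by
      intro S
      by_cases hS : S.Nonempty
      · rw [if_pos hS]
        exact Nat.card_congr
          ((Equiv.subtypeSubtypeEquivSubtypeInter _ _).trans (fiberEquiv n j hj S hS))
      · rw [if_neg hS]
        rw [Finset.not_nonempty_iff_eq_empty] at hS
        subst hS
        have : IsEmpty {a : {p : (Fin n → ℕ∞) × (ℕ → ℕ) //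
            IsExtCode n p.1 p.2 ∧ extIndP1 p.1 p.2 = j} //
            Finset.univ.filter (fun i => a.1.1 i ≠ ⊤) = ∅} := by
          constructor
          intro a
          have htop : ∀ i, a.1.1.1 i = ⊤ := by
            intro i
            by_contra h
            have : i ∈ Finset.univ.filter (fun i => a.1.1.1 i ≠ ⊤) :=
              Finset.mem_filter.mpr ⟨Finset.mem_univ i, h⟩
            rw [a.2] at this
            exact absurd this (Finset.notMem_empty i)
          have := a.1.2.2
          rw [extIndP1, if_pos htop] at this
          exact hj this.symm
        exact Nat.card_of_isEmpty
    simp only [key]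
    rw [← Finset.sum_filter]
    have hset : Finset.univ.filter (fun S : Finset (Fin n) => S.Nonempty) =
        (Finset.Icc 1 n).biUnion (fun k => Finset.powersetCard k Finset.univ) := by
      ext S
      simp only [Finset.mem_filter, Finset.mem_univ, true_and, Finset.mem_biUnion,
        Finset.mem_Icc, Finset.mem_powersetCard_univ]
      constructor
      · intro h
        refine ⟨S.card, ⟨Finset.one_le_card.mpr h, ?_⟩, rfl⟩
        have := S.card_le_univ
        simpa using this
      · rintro ⟨k, ⟨h1, _⟩, rfl⟩
        exact Finset.one_le_card.mp h1
    rw [hset, Finset.sum_biUnion]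
    · apply Finset.sum_congr rfl
      intro k _
      rw [Finset.sum_congr rfl (fun S hS => by
        rw [Finset.mem_powersetCard_univ.mp hS])]
      rw [Finset.sum_const, Finset.card_powersetCard, smul_eq_mul]
      congr 2
      simp
    · intro a _ b _ hab
      apply Finset.disjoint_left.mpr
      intro S hSa hSb
      rw [Finset.mem_powersetCard_univ] at hSa hSb
      exact hab (hSa ▸ hSb)
end
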